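/- arXiv:2205.08951 — 3 statements merged into one kernel-verified Lean document; each statement's English description precedes it below -/
import Mathlib

section
/- Assume K_M is positive semidefinite. Let P(T) = 𝒯_P Σ_P 𝒯_Pᵀ and Q(T) = 𝒯_Q Σ_Q 𝒯_Qᵀ with 𝒯_P, 𝒯_Q ∈ ℝ^{n×n} invertible and Σ_P, Σ_Q diagonal; partition 𝒯_P = [V_P, 𝒯_{P,2}] and 𝒯_Q = [W_Q, 𝒯_{Q,2}] with V_P, W_Q ∈ ℝ^{n×n̂}, and Σ_P = diag(Σ_{P,1}, Σ_{P,2}), Σ_Q = diag(Σ_{Q,1}, Σ_{Q,2}) with Σ_{P,2}, Σ_{Q,2} ∈ ℝ^{(n−n̂)×(n−n̂)}. Suppose V = P̃(T) R_V and W = Q̃(T) R_W for some matrices R_V, R_W ∈ ℝ^{n̂×n̂}. Then for every t ∈ [0,T] there exist matrices M_{F̃}(t), M_{P̃} ∈ ℝ^{n̂×n̂} and M_{F̃,2}(t), M_{P̃,2} ∈ ℝ^{(n−n̂)×n̂} such that F̃(t) = V_P M_{F̃}(t) + 𝒯_{P,2} Σ_{P,2} M_{F̃,2}(t) and V = V_P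 M_{P̃} + 𝒯_{P,2} Σ_{P,2} M_{P̃,2}; and there exist M_{G̃}(t), M_{Q̃} ∈ ℝ^{n̂×n̂} and M_{G̃,2}(t), M_{Q̃,2} ∈ ℝ^{(n−n̂)×n̂} such that G̃(t) = W_Q M_{G̃}(t) + 𝒯_{Q,2} Σ_{Q,2} M_{G̃,2}(t) and W = W_Q M_{Q̃} + 𝒯_{Q,2} Σ_{Q,2} M_{Q̃,2}. -/
open Matrix MeasureTheory Filter
open scoped Kronecker Topology

/-- Column-stacking vectorization of a matrix: `vecM X (j, i) = X i j`. -/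
def vecM {a b : Type*} (X : Matrix a b ℝ) : b × a → ℝ := fun p => X p.2 p.1

/-- Inverse of column-stacking vectorization. -/
def unvecM {a b : Type*} (v : b × a → ℝ) : Matrix a b ℝ := Matrix.of fun i j => v (j, i)

/-- (Mixed) Lyapunov-type operator `X ↦ A₁ X + X A₂ᵀ + ∑ᵢⱼ kᵢⱼ • N₁ᵢ X N₂ⱼᵀ`. -/
def lyapM {a b : Type*} [Fintype a] [Fintype b] {q : ℕ}
    (A₁ : Matrix a a ℝ) (A₂ : Matrix b b ℝ)
    (N₁ : Fin q → Matrix a a ℝ) (N₂ : Fin q → Matrix b b ℝ)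
    (K : Matrix (Fin q) (Fin q) ℝ) (X : Matrix a b ℝ) : Matrix a b ℝ :=
  A₁ * X + X * A₂ᵀ + ∑ i, ∑ j, K i j • (N₁ i * X * (N₂ j)ᵀ)

/-- Frobenius adjoint of `lyapM`: `X ↦ A₁ᵀ X + X A₂ + ∑ᵢⱼ kᵢⱼ • N₁ᵢᵀ X N₂ⱼ`. -/
def lyapAdjM {a b : Type*} [Fintype a] [Fintype b] {q : ℕ}
    (A₁ : Matrix a a ℝ) (A₂ : Matrix b b ℝ)
    (N₁ : Fin q → Matrix a a ℝ) (N₂ : Fin q → Matrix b b ℝ)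
    (K : Matrix (Fin q) (Fin q) ℝ) (X : Matrix a b ℝ) : Matrix a b ℝ :=
  A₁ᵀ * X + X * A₂ + ∑ i, ∑ j, K i j • ((N₁ i)ᵀ * X * N₂ j)

/-- Kronecker matrix `𝒦 = I ⊗ A₁ + A₂ ⊗ I + ∑ᵢⱼ kᵢⱼ • (N₂ᵢ ⊗ N₁ⱼ)` associated to `lyapM`. -/
noncomputable def kronM {a b : Type*} [Fintype a] [Fintype b] [DecidableEq a] [DecidableEq b] {q : ℕ}
    (A₁ : Matrix a a ℝ) (A₂ : Matrix b b ℝ)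
    (N₁ : Fin q → Matrix a a ℝ) (N₂ : Fin q → Matrix b b ℝ)
    (K : Matrix (Fin q) (Fin q) ℝ) : Matrix (b × a) (b × a) ℝ :=
  (1 : Matrix b b ℝ) ⊗ₖ A₁ + A₂ ⊗ₖ (1 : Matrix a a ℝ) + ∑ i, ∑ j, K i j • (N₂ i ⊗ₖ N₁ j)

/-- `F` solves the matrix ODE `F' = L (F t)` at every `t ∈ [0,T]` (entrywise). -/
def solvesODE {a b : Type*} (L : Matrix a b ℝ → Matrix a b ℝ)
    (F : ℝ → Matrix a b ℝ) (T : ℝ) : Prop :=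
  ∀ t ∈ Set.Icc (0:ℝ) T, ∀ i j, HasDerivAt (fun s => F s i j) (L (F t) i j) t

/-- Entrywise integral `∫₀ᵀ F(t) dt`. -/
noncomputable def intM {a b : Type*} (F : ℝ → Matrix a b ℝ) (T : ℝ) : Matrix a b ℝ :=
  Matrix.of fun i j => ∫ t in (0:ℝ)..T, F t i j

/-- Explicit solution of a vectorized linear matrix ODE via the matrix exponential. -/
noncomputable def expSolM {a b : Type*} [Fintype a] [Fintype b] [DecidableEq a] [DecidableEq b]
    (Kmat : Matrix (b × a) (b × a) ℝ) (F₀ : Matrix a b ℝ) (t : ℝ) : Matrix a b ℝ :=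
  unvecM (NormedSpace.exp (t • Kmat) *ᵥ vecM F₀)

/-- The embedding of the trailing `n - nh` indices into `Fin n`. -/
def tailEmb {n nh : ℕ} (h : nh ≤ n) : Fin (n - nh) → Fin n :=
  fun j => Fin.cast (Nat.sub_add_cancel h) (j.addNat nh)

section helpers
variable {ι : Type*} [Fintype ι] [DecidableEq ι] {q : ℕ}

lemma lyapM_add {a b : Type*} [Fintype a] [Fintype b] (A₁ : Matrix a a ℝ) (A₂ : Matrix b b ℝ)
    (N₁ : Fin q → Matrix a a ℝ) (N₂ : Fin q → Matrix b b ℝ) (K : Matrix (Fin q) (Fin q) ℝ)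
    (X Y : Matrix a b ℝ) :
    lyapM A₁ A₂ N₁ N₂ K (X + Y) = lyapM A₁ A₂ N₁ N₂ K X + lyapM A₁ A₂ N₁ N₂ K Y := by
  simp only [lyapM, mul_add, add_mul, Matrix.mul_add, Matrix.add_mul, smul_add,
    Finset.sum_add_distrib]
  abel

lemma lyapM_smul {a b : Type*} [Fintype a] [Fintype b] (A₁ : Matrix a a ℝ) (A₂ : Matrix b b ℝ)
    (N₁ : Fin q → Matrix a a ℝ) (N₂ : Fin q → Matrix b b ℝ) (K : Matrix (Fin q) (Fin q) ℝ)
    (c : ℝ) (X : Matrix a b ℝ) :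
    lyapM A₁ A₂ N₁ N₂ K (c • X) = c • lyapM A₁ A₂ N₁ N₂ K X := by
  simp only [lyapM, Matrix.mul_smul, Matrix.smul_mul, smul_add, Finset.smul_sum]
  congr 1
  refine Finset.sum_congr rfl fun i _ => Finset.sum_congr rfl fun j _ => ?_
  rw [smul_comm]

noncomputable def lyapLin (A : Matrix ι ι ℝ) (N : Fin q → Matrix ι ι ℝ)
    (K : Matrix (Fin q) (Fin q) ℝ) : (ι → ι → ℝ) →ₗ[ℝ] (ι → ι → ℝ) where
  toFun X := lyapM A A N N K X
  map_add' X Y := lyapM_add A A N N K X Y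
  map_smul' c X := lyapM_smul A A N N K c X

lemma exists_sol (A : Matrix ι ι ℝ) (N : Fin q → Matrix ι ι ℝ)
    (K : Matrix (Fin q) (Fin q) ℝ) (X₀ : Matrix ι ι ℝ) :
    ∃ Fh : ℝ → Matrix ι ι ℝ, Fh 0 = X₀ ∧
      ∀ t : ℝ, ∀ i j, HasDerivAt (fun s => Fh s i j) (lyapM A A N N K (Fh t) i j) t := by
  classical
  set E := (ι → ι → ℝ) with hE
  let l : E →L[ℝ] E := (lyapLin A N K).toContinuousLinearMap
  refine ⟨fun u => (NormedSpace.exp (u • l)) (X₀ : E), ?_, ?_⟩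
  · simp; rfl
  · intro t i j
    have h1 : HasDerivAt (fun u : ℝ => NormedSpace.exp (u • l))
        (l * NormedSpace.exp (t • l)) t := hasDerivAt_exp_smul_const' l t
    let ev : (E →L[ℝ] E) →L[ℝ] E := ContinuousLinearMap.apply ℝ E (X₀ : E)
    have h2 : HasDerivAt (fun u : ℝ => (NormedSpace.exp (u • l)) (X₀ : E))
        ((l * NormedSpace.exp (t • l)) (X₀ : E)) t :=
      (ev.hasFDerivAt.comp_hasDerivAt t h1)
    let π : E →L[ℝ] ℝ := LinearMap.toContinuousLinearMap
      { toFun := fun M : E => M i j, map_add' := fun _ _ => rfl, map_smul' := fun _ _ => rfl }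
    have h3 := π.hasFDerivAt.comp_hasDerivAt t h2
    exact h3
end helpers

section helpers2
variable {ι : Type*} [Fintype ι] [DecidableEq ι] {q : ℕ}

lemma star_vec (x : ι → ℝ) : star x = x := by
  funext i; exact star_trivial _

lemma dot_expand (M : Matrix ι ι ℝ) (x : ι → ℝ) :
    x ⬝ᵥ M *ᵥ x = ∑ i, ∑ j, x i * M i j * x j := by
  simp [dotProduct, Matrix.mulVec, Finset.mul_sum, mul_assoc]

lemma dot_sum_mulVec {γ : Type*} (s : Finset γ) (f : γ → Matrix ι ι ℝ) (x : ι → ℝ) :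
    x ⬝ᵥ (∑ i ∈ s, f i) *ᵥ x = ∑ i ∈ s, x ⬝ᵥ (f i) *ᵥ x := by
  classical
  induction s using Finset.induction_on with
  | empty => simp
  | insert _ _ h ih => rw [Finset.sum_insert h, Finset.sum_insert h, Matrix.add_mulVec,
      dotProduct_add, ih]

lemma dot_add_mulVec (M N : Matrix ι ι ℝ) (x : ι → ℝ) :
    x ⬝ᵥ (M + N) *ᵥ x = x ⬝ᵥ M *ᵥ x + x ⬝ᵥ N *ᵥ x := by
  rw [Matrix.add_mulVec, dotProduct_add]

lemma dot_smul_mulVec (c : ℝ) (M : Matrix ι ι ℝ) (x : ι → ℝ) :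
    x ⬝ᵥ (c • M) *ᵥ x = c * (x ⬝ᵥ M *ᵥ x) := by
  rw [Matrix.smul_mulVec, dotProduct_smul, smul_eq_mul]

open scoped MatrixOrder in
lemma quad_pi_nonneg (N : Fin q → Matrix ι ι ℝ) (K : Matrix (Fin q) (Fin q) ℝ)
    (hK : K.PosSemidef) {X : Matrix ι ι ℝ} (hX : X.PosSemidef) (x : ι → ℝ) :
    0 ≤ x ⬝ᵥ (∑ i, ∑ j, K i j • (N i * X * (N j)ᵀ)) *ᵥ x := by
  obtain ⟨B, rfl⟩ := CStarAlgebra.nonneg_iff_eq_star_mul_self.mp hX.nonneg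
  have hBH : Bᴴ = Bᵀ := by ext i j; simp [Matrix.conjTranspose_apply]
  rw [Matrix.star_eq_conjTranspose, hBH]
  have key : ∀ i j, x ⬝ᵥ (N i * (Bᵀ * B) * (N j)ᵀ) *ᵥ x
      = (B *ᵥ ((N i)ᵀ *ᵥ x)) ⬝ᵥ (B *ᵥ ((N j)ᵀ *ᵥ x)) := by
    intro i j
    have h1 : N i * (Bᵀ * B) * (N j)ᵀ = (N i * Bᵀ) * (B * (N j)ᵀ) := by
      simp only [Matrix.mul_assoc]
    rw [h1, ← Matrix.mulVec_mulVec, Matrix.dotProduct_mulVec x (N i * Bᵀ),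
      ← Matrix.mulVec_transpose, Matrix.transpose_mul, Matrix.transpose_transpose,
      ← Matrix.mulVec_mulVec, ← Matrix.mulVec_mulVec]
  set w : Fin q → ι → ℝ := fun i => B *ᵥ ((N i)ᵀ *ᵥ x) with hw
  have step : x ⬝ᵥ (∑ i, ∑ j, K i j • (N i * (Bᵀ * B) * (N j)ᵀ)) *ᵥ x
      = ∑ i, ∑ j, K i j * (w i ⬝ᵥ w j) := by
    rw [dot_sum_mulVec]
    refine Finset.sum_congr rfl fun i _ => ?_
    rw [dot_sum_mulVec]
    refine Finset.sum_congr rfl fun j _ => ?_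
    rw [dot_smul_mulVec, key i j]
  rw [step]
  have h1 : ∀ i, ∑ j, K i j * (w i ⬝ᵥ w j) = ∑ c : ι, ∑ j, K i j * (w i c * w j c) :=
    fun i => by
      simp only [dotProduct, Finset.mul_sum]
      exact Finset.sum_comm
  have swap : ∑ i, ∑ j, K i j * (w i ⬝ᵥ w j)
      = ∑ c : ι, (fun i => w i c) ⬝ᵥ K *ᵥ (fun i => w i c) :=
    calc ∑ i, ∑ j, K i j * (w i ⬝ᵥ w j)
        = ∑ i, ∑ c : ι, ∑ j, K i j * (w i c * w j c) :=
          Finset.sum_congr rfl fun i _ => h1 i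
      _ = ∑ c : ι, ∑ i, ∑ j, K i j * (w i c * w j c) := Finset.sum_comm
      _ = ∑ c : ι, (fun i => w i c) ⬝ᵥ K *ᵥ (fun i => w i c) := by
          refine Finset.sum_congr rfl fun c _ => ?_
          simp only [dotProduct, Matrix.mulVec, Finset.mul_sum]
          exact Finset.sum_congr rfl fun i _ => Finset.sum_congr rfl fun j _ => by ring
  rw [swap]
  refine Finset.sum_nonneg fun c _ => ?_
  have := hK.dotProduct_mulVec_nonneg (fun i => w i c)
  rwa [_root_.star_vec] at this

lemma quad_nonneg_of_unit {M : Matrix ι ι ℝ}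
    (h : ∀ x : ι → ℝ, ∑ i, x i ^ 2 = 1 → 0 ≤ x ⬝ᵥ M *ᵥ x) (x : ι → ℝ) :
    0 ≤ x ⬝ᵥ M *ᵥ x := by
  rcases eq_or_ne (∑ i, x i ^ 2) 0 with h0 | h0
  · have hx : x = 0 := by
      funext i
      have := (Finset.sum_eq_zero_iff_of_nonneg (fun i _ => sq_nonneg (x i))).mp h0 i
        (Finset.mem_univ i)
      exact pow_eq_zero_iff (two_ne_zero) |>.mp this
    simp [hx]
  · have hpos : 0 < ∑ i, x i ^ 2 :=
      lt_of_le_of_ne (Finset.sum_nonneg fun i _ => sq_nonneg (x i)) (Ne.symm h0)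
    set r : ℝ := Real.sqrt (∑ i, x i ^ 2) with hr
    have hrpos : 0 < r := Real.sqrt_pos.mpr hpos
    have hr2 : r ^ 2 = ∑ i, x i ^ 2 := Real.sq_sqrt hpos.le
    have hy : ∑ i, (r⁻¹ • x) i ^ 2 = 1 := by
      simp only [Pi.smul_apply, smul_eq_mul, mul_pow, ← Finset.mul_sum]
      rw [← hr2]
      field_simp
    have hq := h (r⁻¹ • x) hy
    have hexp : (r⁻¹ • x) ⬝ᵥ M *ᵥ (r⁻¹ • x) = r⁻¹ * (r⁻¹ * (x ⬝ᵥ M *ᵥ x)) := by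
      rw [Matrix.mulVec_smul, smul_dotProduct, dotProduct_smul]
      simp [smul_eq_mul, mul_assoc]
    rw [hexp] at hq
    have e1 : 0 ≤ r * (r⁻¹ * (r⁻¹ * (x ⬝ᵥ M *ᵥ x))) := mul_nonneg hrpos.le hq
    rw [← mul_assoc, mul_inv_cancel₀ hrpos.ne', one_mul] at e1
    have e2 : 0 ≤ r * (r⁻¹ * (x ⬝ᵥ M *ᵥ x)) := mul_nonneg hrpos.le e1
    rw [← mul_assoc, mul_inv_cancel₀ hrpos.ne', one_mul] at e2
    exact e2

lemma quad_abs_le (M : Matrix ι ι ℝ) (x : ι → ℝ) (hx : ∀ i, |x i| ≤ 1) :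
    |x ⬝ᵥ M *ᵥ x| ≤ ∑ i, ∑ j, |M i j| := by
  rw [dot_expand]
  calc |∑ i, ∑ j, x i * M i j * x j| ≤ ∑ i, |∑ j, x i * M i j * x j| :=
        Finset.abs_sum_le_sum_abs _ _
    _ ≤ ∑ i, ∑ j, |M i j| := by
        refine Finset.sum_le_sum fun i _ => ?_
        calc |∑ j, x i * M i j * x j| ≤ ∑ j, |x i * M i j * x j| :=
              Finset.abs_sum_le_sum_abs _ _
          _ ≤ ∑ j, |M i j| := by
              refine Finset.sum_le_sum fun j _ => ?_
              rw [abs_mul, abs_mul]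
              calc |x i| * |M i j| * |x j| ≤ 1 * |M i j| * 1 := by
                    gcongr
                    · exact hx i
                    · exact hx j
                _ = |M i j| := by ring

lemma abs_le_one_of_unit {x : ι → ℝ} (hx : ∑ i, x i ^ 2 = 1) (i : ι) : |x i| ≤ 1 := by
  have h1 : x i ^ 2 ≤ 1 := by
    rw [← hx]
    exact Finset.single_le_sum (fun j _ => sq_nonneg (x j)) (Finset.mem_univ i)
  rw [abs_le]; constructor <;> nlinarith
end helpers2

section psd
variable {ι : Type*} [Fintype ι] [DecidableEq ι] {q : ℕ}

lemma psd_invariant (A : Matrix ι ι ℝ) (N : Fin q → Matrix ι ι ℝ)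
    (K : Matrix (Fin q) (Fin q) ℝ) (hK : K.PosSemidef) {T : ℝ}
    (Z : ℝ → Matrix ι ι ℝ) (hZ : solvesODE (lyapM A A N N K) Z T)
    (hsym : ∀ s, (Z s)ᵀ = Z s) (h0 : (Z 0).PosSemidef) :
    ∀ t ∈ Set.Icc (0:ℝ) T, (Z t).PosSemidef := by
  classical
  intro t ht
  have hT : (0:ℝ) ≤ T := le_trans ht.1 ht.2
  have herm : ∀ s, (Z s).IsHermitian := by
    intro s
    have h1 : (Z s)ᴴ = (Z s)ᵀ := by ext i j; simp [Matrix.conjTranspose_apply]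
    rw [Matrix.IsHermitian, h1, hsym]
  have hcont : ∀ i j, ContinuousOn (fun s => Z s i j) (Set.Icc 0 T) :=
    fun i j s hs => ((hZ s hs i j).continuousAt).continuousWithinAt
  set cl : ℝ → ℝ := fun s => max (min s T) 0 with hcl
  have hclcont : Continuous cl := (continuous_id.min continuous_const).max continuous_const
  have hclmem : ∀ s, cl s ∈ Set.Icc (0:ℝ) T := fun s =>
    ⟨le_max_right _ _, max_le (min_le_right _ _) hT⟩
  have hcleq : ∀ s ∈ Set.Icc (0:ℝ) T, cl s = s := fun s hs => by
    simp only [hcl, min_eq_left hs.2, max_eq_left hs.1]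
  have hZccont : ∀ i j, Continuous fun s => Z (cl s) i j := fun i j =>
    (hcont i j).comp_continuous hclcont hclmem
  set S : Set (ι → ℝ) := {x | ∑ i, x i ^ 2 = 1} with hS
  have hScl : IsClosed S :=
    isClosed_eq (continuous_finset_sum _ fun i _ => (continuous_apply i).pow 2) continuous_const
  have hSsub : S ⊆ Set.pi Set.univ fun _ : ι => Set.Icc (-1:ℝ) 1 := by
    intro x hx i _
    exact abs_le.mp (abs_le_one_of_unit hx i)
  have hScomp : IsCompact S :=
    (isCompact_univ_pi fun _ => isCompact_Icc).of_isClosed_subset hScl hSsub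
  set cL : ℝ := ∑ i, ∑ j, |lyapM A A N N K 1 i j| with hcL
  set c : ℝ := cL + 1 with hc
  have main : ∀ ε > (0:ℝ), ∀ u ∈ Set.Icc (0:ℝ) T, ∀ x ∈ S,
      0 < x ⬝ᵥ Z u *ᵥ x + ε * Real.exp (c * u) := by
    intro ε hε
    by_contra hcon
    push_neg at hcon
    obtain ⟨t₁, ht₁, x₁, hx₁, hle1⟩ := hcon
    set qf : ℝ × (ι → ℝ) → ℝ :=
      fun p => p.2 ⬝ᵥ Z (cl p.1) *ᵥ p.2 + ε * Real.exp (c * p.1) with hqfdef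
    have hqf_app : ∀ u (y : ι → ℝ), qf (u, y) = y ⬝ᵥ Z (cl u) *ᵥ y + ε * Real.exp (c * u) :=
      fun _ _ => rfl
    have hqfcont : Continuous qf := by
      refine Continuous.add ?_ (continuous_const.mul (Real.continuous_exp.comp
        (continuous_const.mul continuous_fst)))
      have heq : (fun p : ℝ × (ι → ℝ) => p.2 ⬝ᵥ Z (cl p.1) *ᵥ p.2)
          = fun p => ∑ i, ∑ j, p.2 i * Z (cl p.1) i j * p.2 j := by
        funext p; exact dot_expand _ _
      rw [heq]
      refine continuous_finset_sum _ fun i _ => continuous_finset_sum _ fun j _ => ?_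
      exact (((continuous_apply i).comp continuous_snd).mul
        ((hZccont i j).comp continuous_fst)).mul ((continuous_apply j).comp continuous_snd)
    set E : Set (ℝ × (ι → ℝ)) := (Set.Icc 0 T ×ˢ S) ∩ {p | qf p ≤ 0} with hE
    have hEcomp : IsCompact E := (isCompact_Icc.prod hScomp).inter_right
      (isClosed_le hqfcont continuous_const)
    have hEne : E.Nonempty := ⟨(t₁, x₁), ⟨⟨ht₁, hx₁⟩, by
      rw [Set.mem_setOf_eq, hqf_app, hcleq t₁ ht₁]; exact hle1⟩⟩
    set t₀ : ℝ := sInf (Prod.fst '' E) with ht₀def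
    have himg : IsCompact (Prod.fst '' E) := hEcomp.image continuous_fst
    have himgne : (Prod.fst '' E).Nonempty := hEne.image _
    have ht₀mem : t₀ ∈ Prod.fst '' E := himg.sInf_mem himgne
    obtain ⟨p₀, hp₀E, hp₀1⟩ := ht₀mem
    obtain ⟨⟨hp₀Icc, hp₀S⟩, hp₀qf⟩ := hp₀E
    set x₀ : ι → ℝ := p₀.2 with hx₀def
    have ht₀Icc : t₀ ∈ Set.Icc (0:ℝ) T := hp₀1 ▸ hp₀Icc
    have hqf₀ : qf (t₀, x₀) ≤ 0 := by rw [← hp₀1]; exact hp₀qf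
    have hlow : ∀ s, 0 ≤ s → s < t₀ → ∀ y ∈ S, 0 < qf (s, y) := by
      intro s hs0 hst y hy
      by_contra hns
      push_neg at hns
      have hsmem : (s, y) ∈ E := ⟨⟨⟨hs0, le_trans hst.le ht₀Icc.2⟩, hy⟩, hns⟩
      have : t₀ ≤ s := csInf_le himg.bddBelow ⟨(s,y), hsmem, rfl⟩
      exact absurd hst (not_lt.mpr this)
    have ht₀pos : 0 < t₀ := by
      rcases lt_or_eq_of_le ht₀Icc.1 with h | h
      · exact h
      · exfalso
        have h0' : 0 ≤ x₀ ⬝ᵥ Z 0 *ᵥ x₀ := by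
          have := h0.dotProduct_mulVec_nonneg x₀; rwa [_root_.star_vec] at this
        have hcl0 : cl 0 = 0 := hcleq 0 ⟨le_rfl, hT⟩
        have : qf (t₀, x₀) = x₀ ⬝ᵥ Z 0 *ᵥ x₀ + ε := by
          rw [← h, hqf_app, hcl0, mul_zero, Real.exp_zero, mul_one]
        rw [this] at hqf₀
        linarith
    set δ : ℝ := ε * Real.exp (c * t₀) with hδdef
    have hδpos : 0 < δ := mul_pos hε (Real.exp_pos _)
    set M₀ : Matrix ι ι ℝ := Z t₀ + δ • (1 : Matrix ι ι ℝ) with hM₀def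
    have hdot1 : ∀ y : ι → ℝ, y ⬝ᵥ (1:Matrix ι ι ℝ) *ᵥ y = ∑ i, y i ^ 2 := fun y => by
      rw [Matrix.one_mulVec]; simp [dotProduct, sq]
    have hM₀expand : ∀ y : ι → ℝ, y ⬝ᵥ M₀ *ᵥ y
        = y ⬝ᵥ Z t₀ *ᵥ y + δ * (y ⬝ᵥ (1:Matrix ι ι ℝ) *ᵥ y) := fun y => by
      rw [hM₀def, dot_add_mulVec, dot_smul_mulVec]
    have hqf_eq : ∀ y : ι → ℝ, y ∈ S → y ⬝ᵥ M₀ *ᵥ y = qf (t₀, y) := by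
      intro y hy
      have hy' : ∑ i, y i ^ 2 = 1 := hy
      rw [hM₀expand, hdot1, hy', mul_one, hqf_app, hcleq t₀ ht₀Icc, hδdef]
    have hM₀T : M₀ᵀ = M₀ := by
      rw [hM₀def, Matrix.transpose_add, Matrix.transpose_smul, Matrix.transpose_one, hsym]
    have hM₀psd : M₀.PosSemidef := by
      refine Matrix.PosSemidef.of_dotProduct_mulVec_nonneg ?_ ?_
      · have h1 : (M₀)ᴴ = M₀ᵀ := by ext i j; simp [Matrix.conjTranspose_apply]
        show M₀ᴴ = M₀
        rw [h1, hM₀T]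
      · intro y
        rw [_root_.star_vec]
        refine quad_nonneg_of_unit (fun y hy => ?_) y
        rw [hqf_eq y hy]
        have hcy : Continuous fun s => qf (s, y) :=
          hqfcont.comp (continuous_id.prodMk continuous_const)
        have hev : ∀ᶠ s in 𝓝[<] t₀, 0 ≤ qf (s, y) := by
          filter_upwards [Ioo_mem_nhdsLT (ht₀pos : (0:ℝ) < t₀)] with s hs
          exact (hlow s hs.1.le hs.2 y hy).le
        exact ge_of_tendsto ((hcy.tendsto t₀).mono_left nhdsWithin_le_nhds) hev
    have hqf₀0 : qf (t₀, x₀) = 0 := by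
      refine le_antisymm hqf₀ ?_
      rw [← hqf_eq x₀ hp₀S]
      have := hM₀psd.dotProduct_mulVec_nonneg x₀; rwa [_root_.star_vec] at this
    have hMx : M₀ *ᵥ x₀ = 0 := by
      apply (hM₀psd.dotProduct_mulVec_zero_iff x₀).mp
      rw [_root_.star_vec, hqf_eq x₀ hp₀S, hqf₀0]
    set L1 : Matrix ι ι ℝ := lyapM A A N N K 1 with hL1def
    set d : ℝ := x₀ ⬝ᵥ (lyapM A A N N K (Z t₀)) *ᵥ x₀ + ε * (c * Real.exp (c * t₀)) with hddef
    set g : ℝ → ℝ := fun s => x₀ ⬝ᵥ Z s *ᵥ x₀ + ε * Real.exp (c * s) with hgdef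
    have hg : HasDerivAt g d t₀ := by
      have h1 : HasDerivAt (fun s => x₀ ⬝ᵥ Z s *ᵥ x₀)
          (x₀ ⬝ᵥ (lyapM A A N N K (Z t₀)) *ᵥ x₀) t₀ := by
        have heq : (fun s => x₀ ⬝ᵥ Z s *ᵥ x₀) = fun s => ∑ i, ∑ j, x₀ i * Z s i j * x₀ j := by
          funext s; exact dot_expand _ _
        rw [heq, dot_expand]
        refine HasDerivAt.fun_sum fun i _ => HasDerivAt.fun_sum fun j _ => ?_
        exact ((hZ t₀ ht₀Icc i j).const_mul (x₀ i)).mul_const (x₀ j)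
      have h3 : HasDerivAt (fun s => ε * Real.exp (c * s)) (ε * (c * Real.exp (c * t₀))) t₀ := by
        have he : HasDerivAt (fun s : ℝ => Real.exp (c * s)) (Real.exp (c * t₀) * c) t₀ :=
          (Real.hasDerivAt_exp (c * t₀)).comp t₀ (by simpa using (hasDerivAt_id t₀).const_mul c)
        have := he.const_mul ε
        rw [show ε * (c * Real.exp (c * t₀)) = ε * (Real.exp (c * t₀) * c) by ring]
        exact this
      exact h1.add h3
    have hquadL1 : |x₀ ⬝ᵥ L1 *ᵥ x₀| ≤ cL :=
      quad_abs_le _ _ (fun i => abs_le_one_of_unit hp₀S i)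
    have hZt : Z t₀ = M₀ + (-δ) • (1 : Matrix ι ι ℝ) := by
      rw [hM₀def, neg_smul, add_neg_cancel_right]
    have hLsplit : lyapM A A N N K (Z t₀) = lyapM A A N N K M₀ + (-δ) • L1 := by
      rw [hZt, lyapM_add, lyapM_smul, hL1def]
    have hquadM₀L : 0 ≤ x₀ ⬝ᵥ (lyapM A A N N K M₀) *ᵥ x₀ := by
      rw [lyapM, dot_add_mulVec, dot_add_mulVec]
      have e1 : x₀ ⬝ᵥ (A * M₀) *ᵥ x₀ = 0 := by
        rw [← Matrix.mulVec_mulVec, hMx, Matrix.mulVec_zero, dotProduct_zero]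
      have e2 : x₀ ⬝ᵥ (M₀ * Aᵀ) *ᵥ x₀ = 0 := by
        rw [Matrix.dotProduct_mulVec, ← Matrix.vecMul_vecMul]
        have hvm : x₀ ᵥ* M₀ = 0 := by
          rw [← Matrix.mulVec_transpose, hM₀T, hMx]
        rw [hvm, Matrix.zero_vecMul, zero_dotProduct]
      rw [e1, e2, zero_add, zero_add]
      exact quad_pi_nonneg N K hK hM₀psd x₀
    have hdpos : 0 < d := by
      rw [hddef, hLsplit, dot_add_mulVec, dot_smul_mulVec]
      have habs := abs_le.mp hquadL1
      have hεc : ε * (c * Real.exp (c * t₀)) = c * δ := by rw [hδdef]; ring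
      rw [hεc, hc]
      have hmul : δ * (x₀ ⬝ᵥ L1 *ᵥ x₀) ≤ δ * cL := mul_le_mul_of_nonneg_left habs.2 hδpos.le
      nlinarith [hquadM₀L, hδpos, hmul]
    have hslope' : Tendsto (slope g t₀) (𝓝[<] t₀) (𝓝 d) :=
      (hasDerivAt_iff_tendsto_slope.mp hg).mono_left
        (nhdsWithin_mono _ fun s hs => (ne_of_lt hs : s ≠ t₀))
    have hev1 : ∀ᶠ s in 𝓝[<] t₀, 0 < slope g t₀ s :=
      hslope'.eventually (eventually_gt_nhds hdpos)
    have hev2 : ∀ᶠ s in 𝓝[<] t₀, s ∈ Set.Ioo (0:ℝ) t₀ :=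
      Ioo_mem_nhdsLT ht₀pos
    obtain ⟨s, hs1, hs2⟩ := (hev1.and hev2).exists
    have hgt₀ : g t₀ = 0 := by
      have h1 : g t₀ = qf (t₀, x₀) := by
        rw [hgdef, hqf_app, hcleq t₀ ht₀Icc]
      rw [h1, hqf₀0]
    have hgs : 0 < g s := by
      have h1 : g s = qf (s, x₀) := by
        rw [hgdef, hqf_app, hcleq s ⟨hs2.1.le, le_trans hs2.2.le ht₀Icc.2⟩]
      rw [h1]
      exact hlow s hs2.1.le hs2.2 x₀ hp₀S
    rw [slope_def_field] at hs1
    have hneg : s - t₀ < 0 := sub_neg.mpr hs2.2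
    have hlt : g s - g t₀ < 0 := by
      by_contra hge
      push_neg at hge
      have : (g s - g t₀) / (s - t₀) ≤ 0 := div_nonpos_of_nonneg_of_nonpos hge hneg.le
      linarith
    linarith
  refine Matrix.PosSemidef.of_dotProduct_mulVec_nonneg (herm t) ?_
  intro x
  rw [_root_.star_vec]
  refine quad_nonneg_of_unit (fun y hy => ?_) x
  by_contra hneg
  push_neg at hneg
  have hεpos : 0 < -(y ⬝ᵥ Z t *ᵥ y) / Real.exp (c * t) :=
    div_pos (neg_pos.mpr hneg) (Real.exp_pos _)
  have hm := main (-(y ⬝ᵥ Z t *ᵥ y) / Real.exp (c * t)) hεpos t ht y hy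
  rw [div_mul_cancel₀ _ (Real.exp_ne_zero _)] at hm
  linarith
end psd

section blocks
variable {q : ℕ}

lemma lyapM_transpose {a b : Type*} [Fintype a] [Fintype b]
    (A₁ : Matrix a a ℝ) (A₂ : Matrix b b ℝ)
    (N₁ : Fin q → Matrix a a ℝ) (N₂ : Fin q → Matrix b b ℝ)
    (K : Matrix (Fin q) (Fin q) ℝ) (X : Matrix a b ℝ) :
    (lyapM A₁ A₂ N₁ N₂ K X)ᵀ = lyapM A₂ A₁ N₂ N₁ Kᵀ Xᵀ := by
  simp only [lyapM, Matrix.transpose_add, Matrix.transpose_mul, Matrix.transpose_smul,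
    Matrix.transpose_sum, Matrix.transpose_transpose, Matrix.mul_assoc, Matrix.transpose_apply]
  rw [Finset.sum_comm]
  abel

lemma fromBlocks_sum {n₁ n₂ m₁ m₂ γ : Type*} (s : Finset γ)
    (f : γ → Matrix n₁ m₁ ℝ) (g : γ → Matrix n₁ m₂ ℝ)
    (h : γ → Matrix n₂ m₁ ℝ) (k : γ → Matrix n₂ m₂ ℝ) :
    ∑ i ∈ s, Matrix.fromBlocks (f i) (g i) (h i) (k i) =
      Matrix.fromBlocks (∑ i ∈ s, f i) (∑ i ∈ s, g i) (∑ i ∈ s, h i) (∑ i ∈ s, k i) := by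
  classical
  induction s using Finset.induction_on with
  | empty => simp [Matrix.fromBlocks_zero]
  | insert _ _ hne ih => simp [Finset.sum_insert hne, ih, Matrix.fromBlocks_add]

lemma lyapM_fromBlocks {a b : Type*} [Fintype a] [Fintype b]
    (A : Matrix a a ℝ) (Ah : Matrix b b ℝ)
    (N : Fin q → Matrix a a ℝ) (Nh : Fin q → Matrix b b ℝ)
    (K : Matrix (Fin q) (Fin q) ℝ)
    (W : Matrix a a ℝ) (X : Matrix a b ℝ) (Y : Matrix b a ℝ) (V : Matrix b b ℝ) :
    lyapM (Matrix.fromBlocks A 0 0 Ah) (Matrix.fromBlocks A 0 0 Ah)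
      (fun i => Matrix.fromBlocks (N i) 0 0 (Nh i)) (fun i => Matrix.fromBlocks (N i) 0 0 (Nh i))
      K (Matrix.fromBlocks W X Y V)
    = Matrix.fromBlocks (lyapM A A N N K W) (lyapM A Ah N Nh K X)
        (lyapM Ah A Nh N K Y) (lyapM Ah Ah Nh Nh K V) := by
  simp only [lyapM, Matrix.fromBlocks_transpose, Matrix.transpose_zero,
    Matrix.fromBlocks_multiply, Matrix.mul_zero, Matrix.zero_mul, add_zero, zero_add,
    Matrix.fromBlocks_smul, smul_zero, fromBlocks_sum, Matrix.fromBlocks_add]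
end blocks

section decomp

lemma decomp_cols {n nh : ℕ} (hn : nh ≤ n) {ct : Type*} [Fintype ct]
    (TP SP : Matrix (Fin n) (Fin n) ℝ) (hTP : IsUnit TP.det) (hSP : SP.IsDiag)
    (X : Matrix (Fin n) ct ℝ)
    (hrow : ∀ j' : Fin (n - nh), SP (tailEmb hn j') (tailEmb hn j') = 0 →
      ∀ b, (TP⁻¹ * X) (tailEmb hn j') b = 0) :
    ∃ (M : Matrix (Fin nh) ct ℝ) (M2 : Matrix (Fin (n - nh)) ct ℝ),
      X = TP.submatrix id (Fin.castLE hn) * M +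
        TP.submatrix id (tailEmb hn) * SP.submatrix (tailEmb hn) (tailEmb hn) * M2 := by
  classical
  set Y := TP⁻¹ * X with hY
  set M1 : Matrix (Fin nh) ct ℝ := Y.submatrix (Fin.castLE hn) id with hM1
  set M2 : Matrix (Fin (n - nh)) ct ℝ := Matrix.of (fun j' b =>
    if SP (tailEmb hn j') (tailEmb hn j') = 0 then 0
    else Y (tailEmb hn j') b / SP (tailEmb hn j') (tailEmb hn j')) with hM2
  refine ⟨M1, M2, ?_⟩
  have htail_inj : Function.Injective (tailEmb hn) := by
    intro a b hab
    have h1 : (a : ℕ) + nh = (b : ℕ) + nh := congrArg Fin.val hab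
    exact Fin.ext (by omega)
  have hmid : ∀ j' b, (SP.submatrix (tailEmb hn) (tailEmb hn) * M2) j' b
      = Y (tailEmb hn j') b := by
    intro j' b
    rw [Matrix.mul_apply]
    rw [Finset.sum_eq_single j']
    · rw [Matrix.submatrix_apply, hM2]
      simp only [Matrix.of_apply]
      by_cases h : SP (tailEmb hn j') (tailEmb hn j') = 0
      · rw [if_pos h, mul_zero, hrow j' h b]
      · rw [if_neg h]
        field_simp
    · intro l' _ hne
      have h0 : SP (tailEmb hn j') (tailEmb hn l') = 0 :=
        hSP fun hc => hne (htail_inj hc).symm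
      rw [Matrix.submatrix_apply, h0, zero_mul]
    · intro h; exact absurd (Finset.mem_univ j') h
  have hXY : X = TP * Y := by
    rw [hY, ← Matrix.mul_assoc, Matrix.mul_nonsing_inv TP hTP, Matrix.one_mul]
  let e : Fin nh ⊕ Fin (n - nh) ≃ Fin n :=
    finSumFinEquiv.trans (finCongr (Nat.add_sub_cancel' hn))
  have he1 : ∀ a : Fin nh, e (Sum.inl a) = Fin.castLE hn a := fun a =>
    Fin.ext (by simp [e, Equiv.trans_apply, finCongr_apply])
  have he2 : ∀ j' : Fin (n - nh), e (Sum.inr j') = tailEmb hn j' := fun j' =>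
    Fin.ext (by simp [e, Equiv.trans_apply, finCongr_apply, tailEmb]; omega)
  rw [hXY, Matrix.mul_assoc (TP.submatrix id (tailEmb hn)) _ M2]
  ext i b
  rw [Matrix.add_apply, Matrix.mul_apply, Matrix.mul_apply, Matrix.mul_apply]
  have hsum : ∑ k, TP i k * Y k b
      = (∑ a : Fin nh, TP i (e (Sum.inl a)) * Y (e (Sum.inl a)) b)
        + ∑ j' : Fin (n - nh), TP i (e (Sum.inr j')) * Y (e (Sum.inr j')) b := by
    rw [← Fintype.sum_sum_type (fun z : Fin nh ⊕ Fin (n - nh) => TP i (e z) * Y (e z) b)]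
    exact (Equiv.sum_comp e (fun k => TP i k * Y k b)).symm
  simp only [he1, he2] at hsum
  rw [hsum]
  refine congrArg₂ (· + ·) (Finset.sum_congr rfl fun a _ => rfl)
    (Finset.sum_congr rfl fun j' _ => ?_)
  rw [hmid]
  rfl
end decomp


section main
open intervalIntegral in
lemma main_decomp {n nh m q : ℕ} (hn : nh ≤ n) {T : ℝ} (hT : 0 < T)
    (A : Matrix (Fin n) (Fin n) ℝ) (N : Fin q → Matrix (Fin n) (Fin n) ℝ)
    (K : Matrix (Fin q) (Fin q) ℝ) (hK : K.PosSemidef)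
    (X₀ : Matrix (Fin n) (Fin m) ℝ)
    (Ahat : Matrix (Fin nh) (Fin nh) ℝ) (Nhat : Fin q → Matrix (Fin nh) (Fin nh) ℝ)
    (X0hat : Matrix (Fin nh) (Fin m) ℝ)
    (F : ℝ → Matrix (Fin n) (Fin n) ℝ) (hF : solvesODE (lyapM A A N N K) F T)
    (hF0 : F 0 = X₀ * X₀ᵀ)
    (Ftil : ℝ → Matrix (Fin n) (Fin nh) ℝ)
    (hFtil : solvesODE (lyapM A Ahat N Nhat K) Ftil T)
    (hFtil0 : Ftil 0 = X₀ * X0hatᵀ)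
    (TP SP : Matrix (Fin n) (Fin n) ℝ) (hTP : IsUnit TP) (hSP : SP.IsDiag)
    (hPdec : intM F T = TP * SP * TPᵀ) :
    (∀ t ∈ Set.Icc (0:ℝ) T,
      ∃ (MF : Matrix (Fin nh) (Fin nh) ℝ) (MF2 : Matrix (Fin (n - nh)) (Fin nh) ℝ),
        Ftil t = TP.submatrix id (Fin.castLE hn) * MF +
          TP.submatrix id (tailEmb hn) * SP.submatrix (tailEmb hn) (tailEmb hn) * MF2)
    ∧ (∀ R : Matrix (Fin nh) (Fin nh) ℝ,
      ∃ (MP : Matrix (Fin nh) (Fin nh) ℝ) (MP2 : Matrix (Fin (n - nh)) (Fin nh) ℝ),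
        intM Ftil T * R = TP.submatrix id (Fin.castLE hn) * MP +
          TP.submatrix id (tailEmb hn) * SP.submatrix (tailEmb hn) (tailEmb hn) * MP2) := by
  classical
  have hT0 : (0:ℝ) ≤ T := hT.le
  have hTdet : IsUnit TP.det := (Matrix.isUnit_iff_isUnit_det TP).mp hTP
  have hKsym : Kᵀ = K := by
    have h1 : Kᴴ = Kᵀ := by ext i j; simp [Matrix.conjTranspose_apply]
    rw [← h1, hK.1]
  obtain ⟨Fh, hFh0, hFhD⟩ := exists_sol Ahat Nhat K (X0hat * X0hatᵀ)
  set Ab : Matrix (Fin n ⊕ Fin nh) (Fin n ⊕ Fin nh) ℝ := Matrix.fromBlocks A 0 0 Ahat with hAb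
  set Nb : Fin q → Matrix (Fin n ⊕ Fin nh) (Fin n ⊕ Fin nh) ℝ :=
    fun i => Matrix.fromBlocks (N i) 0 0 (Nhat i) with hNb
  set Zf : ℝ → Matrix (Fin n ⊕ Fin nh) (Fin n ⊕ Fin nh) ℝ :=
    fun s => Matrix.fromBlocks (F s) (Ftil s) (Ftil s)ᵀ (Fh s) with hZfdef
  have hZfapp : ∀ s, Zf s = Matrix.fromBlocks (F s) (Ftil s) (Ftil s)ᵀ (Fh s) := fun _ => rfl
  set Zs : ℝ → Matrix (Fin n ⊕ Fin nh) (Fin n ⊕ Fin nh) ℝ :=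
    fun s => (2⁻¹ : ℝ) • (Zf s + (Zf s)ᵀ) with hZsdef
  have hZsapp : ∀ s, Zs s = (2⁻¹ : ℝ) • (Zf s + (Zf s)ᵀ) := fun _ => rfl
  have hZsym : ∀ s, (Zs s)ᵀ = Zs s := fun s => by
    rw [hZsapp, Matrix.transpose_smul, Matrix.transpose_add, Matrix.transpose_transpose,
      add_comm]
  have hlyapZf : ∀ s, lyapM Ab Ab Nb Nb K (Zf s)
      = Matrix.fromBlocks (lyapM A A N N K (F s)) (lyapM A Ahat N Nhat K (Ftil s))
          (lyapM Ahat A Nhat N K (Ftil s)ᵀ) (lyapM Ahat Ahat Nhat Nhat K (Fh s)) :=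
    fun s => lyapM_fromBlocks A Ahat N Nhat K (F s) (Ftil s) (Ftil s)ᵀ (Fh s)
  have hZfD : ∀ t ∈ Set.Icc (0:ℝ) T, ∀ i j,
      HasDerivAt (fun s => Zf s i j) (lyapM Ab Ab Nb Nb K (Zf t) i j) t := by
    intro t ht i j
    rw [hlyapZf]
    have htr : lyapM Ahat A Nhat N K (Ftil t)ᵀ = (lyapM A Ahat N Nhat K (Ftil t))ᵀ := by
      rw [lyapM_transpose, hKsym]
    cases i with
    | inl a =>
      cases j with
      | inl b => exact hF t ht a b
      | inr b => exact hFtil t ht a b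
    | inr a =>
      cases j with
      | inl b =>
        rw [Matrix.fromBlocks_apply₂₁, htr, Matrix.transpose_apply]
        exact hFtil t ht b a
      | inr b => exact hFhD t a b
  have hZsD : solvesODE (lyapM Ab Ab Nb Nb K) Zs T := by
    intro t ht i j
    have h1 := hZfD t ht i j
    have h2 := hZfD t ht j i
    have hd := (h1.add h2).const_mul (2⁻¹ : ℝ)
    have hfun : (fun s => Zs s i j) = fun s => (2⁻¹ : ℝ) * (Zf s i j + Zf s j i) := rfl
    have hsplit : lyapM Ab Ab Nb Nb K (Zs t)
        = (2⁻¹:ℝ) • (lyapM Ab Ab Nb Nb K (Zf t) + (lyapM Ab Ab Nb Nb K (Zf t))ᵀ) := by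
      rw [hZsapp, lyapM_smul, lyapM_add]
      congr 2
      rw [lyapM_transpose, hKsym]
    have hval : lyapM Ab Ab Nb Nb K (Zs t) i j
        = (2⁻¹:ℝ) * (lyapM Ab Ab Nb Nb K (Zf t) i j + lyapM Ab Ab Nb Nb K (Zf t) j i) := by
      rw [hsplit]; rfl
    rw [hfun, hval]
    exact hd
  have hBB : Matrix.fromRows X₀ X0hat * (Matrix.fromRows X₀ X0hat)ᵀ = Zf 0 := by
    rw [Matrix.transpose_fromRows, Matrix.fromRows_mul_fromCols, hZfapp,
      hF0, hFtil0, hFh0, Matrix.transpose_mul, Matrix.transpose_transpose]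
  have hZf0T : (Zf 0)ᵀ = Zf 0 := by
    rw [← hBB, Matrix.transpose_mul, Matrix.transpose_transpose]
  have hZs0eq : Zs 0 = Zf 0 := by
    rw [hZsapp, hZf0T]
    rw [← two_smul ℝ (Zf 0), smul_smul]
    norm_num
  have hZs0 : (Zs 0).PosSemidef := by
    rw [hZs0eq, ← hBB]
    have hH : (Matrix.fromRows X₀ X0hat)ᵀ = (Matrix.fromRows X₀ X0hat)ᴴ := by
      ext i j; simp [Matrix.conjTranspose_apply]
    rw [hH]
    exact Matrix.posSemidef_self_mul_conjTranspose _
  have hZspsd : ∀ t ∈ Set.Icc (0:ℝ) T, (Zs t).PosSemidef :=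
    psd_invariant Ab Nb K hK Zs hZsD hZsym hZs0
  have hFtc : ∀ k l, ContinuousOn (fun s => Ftil s k l) (Set.Icc 0 T) :=
    fun k l s hs => (hFtil s hs k l).continuousAt.continuousWithinAt
  have hFtint : ∀ k l, IntervalIntegrable (fun s => Ftil s k l) MeasureTheory.volume 0 T :=
    fun k l => ((Set.uIcc_of_le hT0).symm ▸ hFtc k l).intervalIntegrable
  have hFc : ∀ k l, ContinuousOn (fun s => F s k l) (Set.Icc 0 T) :=
    fun k l s hs => (hF s hs k l).continuousAt.continuousWithinAt
  have hFint : ∀ k l, IntervalIntegrable (fun s => F s k l) MeasureTheory.volume 0 T :=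
    fun k l => ((Set.uIcc_of_le hT0).symm ▸ hFc k l).intervalIntegrable
  have hcore : ∀ j' : Fin (n - nh), SP (tailEmb hn j') (tailEmb hn j') = 0 →
      ∀ t ∈ Set.Icc (0:ℝ) T, ∀ b, ∑ k, TP⁻¹ (tailEmb hn j') k * Ftil t k b = 0 := by
    intro j' hj0
    set v : Fin n → ℝ := fun k => TP⁻¹ (tailEmb hn j') k with hv
    have hvP : ∀ l, ∑ k, v k * intM F T k l = 0 := by
      intro l
      have h1 : (∑ k, v k * intM F T k l) = (TP⁻¹ * intM F T) (tailEmb hn j') l := by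
        rw [Matrix.mul_apply]
      rw [h1, hPdec, ← Matrix.mul_assoc, ← Matrix.mul_assoc,
        Matrix.nonsing_inv_mul TP hTdet, Matrix.one_mul, Matrix.mul_apply]
      refine Finset.sum_eq_zero fun mm _ => ?_
      rcases eq_or_ne (tailEmb hn j') mm with h | h
      · rw [← h, hj0, zero_mul]
      · rw [hSP h, zero_mul]
    set vb : (Fin n ⊕ Fin nh) → ℝ := Sum.elim v 0 with hvb
    set hfun : ℝ → ℝ := fun s => vb ⬝ᵥ Zs s *ᵥ vb with hhfun
    have hfun_app : ∀ s, hfun s = vb ⬝ᵥ Zs s *ᵥ vb := fun _ => rfl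
    have hZsc : ∀ i j, ContinuousOn (fun s => Zs s i j) (Set.Icc 0 T) :=
      fun i j s hs => ((hZsD s hs i j).continuousAt).continuousWithinAt
    have hhc : ContinuousOn hfun (Set.Icc 0 T) := by
      have heq : hfun = fun s => ∑ i, ∑ j, vb i * Zs s i j * vb j :=
        funext fun s => dot_expand _ _
      rw [heq]
      exact continuousOn_finset_sum _ fun i _ => continuousOn_finset_sum _ fun j _ =>
        (continuousOn_const.mul (hZsc i j)).mul continuousOn_const
    have hsplit : ∀ s, hfun s = ∑ k, ∑ l, (v k * v l * 2⁻¹) * (F s k l + F s l k) := by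
      intro s
      rw [hfun_app, dot_expand, Fintype.sum_sum_type]
      simp only [Fintype.sum_sum_type, hvb, Sum.elim_inl, Sum.elim_inr, Pi.zero_apply,
        mul_zero, zero_mul, Finset.sum_const_zero, add_zero, zero_add]
      refine Finset.sum_congr rfl fun k _ => Finset.sum_congr rfl fun l _ => ?_
      show v k * ((2⁻¹:ℝ) * (Zf s (Sum.inl k) (Sum.inl l) + Zf s (Sum.inl l) (Sum.inl k))) * v l
        = _
      have e1 : Zf s (Sum.inl k) (Sum.inl l) = F s k l := rfl
      have e2 : Zf s (Sum.inl l) (Sum.inl k) = F s l k := rfl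
      rw [e1, e2]; ring
    have hintzero : ∫ s in (0:ℝ)..T, hfun s = 0 := by
      have hterm_int : ∀ (k l : Fin n), IntervalIntegrable
          (fun s => (v k * v l * 2⁻¹) * (F s k l + F s l k)) MeasureTheory.volume 0 T :=
        fun k l => ((hFint k l).add (hFint l k)).const_mul _
      have hin1 : ∀ k : Fin n, IntervalIntegrable
          (fun s => ∑ l, (v k * v l * 2⁻¹) * (F s k l + F s l k)) MeasureTheory.volume 0 T := by
        intro k
        have : ContinuousOn (fun s => ∑ l, (v k * v l * 2⁻¹) * (F s k l + F s l k))
            (Set.Icc 0 T) :=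
          continuousOn_finset_sum _ fun l _ =>
            continuousOn_const.mul ((hFc k l).add (hFc l k))
        exact ((Set.uIcc_of_le hT0).symm ▸ this).intervalIntegrable
      calc ∫ s in (0:ℝ)..T, hfun s
          = ∫ s in (0:ℝ)..T, ∑ k, ∑ l, (v k * v l * 2⁻¹) * (F s k l + F s l k) := by
            simp only [hsplit]
        _ = ∑ k, ∑ l, (v k * v l * 2⁻¹) * (intM F T k l + intM F T l k) := by
            rw [intervalIntegral.integral_finset_sum (fun k _ => hin1 k)]
            refine Finset.sum_congr rfl fun k _ => ?_
            rw [intervalIntegral.integral_finset_sum (fun l _ => hterm_int k l)]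
            refine Finset.sum_congr rfl fun l _ => ?_
            rw [intervalIntegral.integral_const_mul,
              intervalIntegral.integral_add (hFint k l) (hFint l k)]
            rfl
        _ = 0 := by
            simp only [mul_add, Finset.sum_add_distrib]
            have hS1 : ∑ k, ∑ l, (v k * v l * 2⁻¹) * intM F T k l = 0 := by
              rw [Finset.sum_comm]
              refine Finset.sum_eq_zero fun l _ => ?_
              have h2 : ∑ k, (v k * v l * 2⁻¹) * intM F T k l
                  = (v l * 2⁻¹) * ∑ k, v k * intM F T k l := by
                rw [Finset.mul_sum]
                exact Finset.sum_congr rfl fun k _ => by ring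
              rw [h2, hvP l, mul_zero]
            have hS2 : ∑ k, ∑ l, (v k * v l * 2⁻¹) * intM F T l k = 0 := by
              refine Finset.sum_eq_zero fun k _ => ?_
              have h2 : ∑ l, (v k * v l * 2⁻¹) * intM F T l k
                  = (v k * 2⁻¹) * ∑ l, v l * intM F T l k := by
                rw [Finset.mul_sum]
                exact Finset.sum_congr rfl fun l _ => by ring
              rw [h2, hvP k, mul_zero]
            rw [hS1, hS2, add_zero]
    have hnonneg : ∀ s ∈ Set.Icc (0:ℝ) T, 0 ≤ hfun s := by
      intro s hs
      have := (hZspsd s hs).dotProduct_mulVec_nonneg vb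
      rwa [_root_.star_vec] at this
    have hzero : ∀ t ∈ Set.Icc (0:ℝ) T, hfun t = 0 := by
      intro t ht
      by_contra hne
      have hpos : 0 < hfun t := lt_of_le_of_ne (hnonneg t ht) (Ne.symm hne)
      have hlt := intervalIntegral.integral_lt_integral_of_continuousOn_of_le_of_exists_lt hT
        continuousOn_const hhc (fun x hx => hnonneg x ⟨hx.1.le, hx.2⟩) ⟨t, ht, hpos⟩
      rw [hintzero, intervalIntegral.integral_zero] at hlt
      exact lt_irrefl 0 hlt
    intro t ht b
    have hmv : Zs t *ᵥ vb = 0 := by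
      apply ((hZspsd t ht).dotProduct_mulVec_zero_iff vb).mp
      rw [_root_.star_vec]
      exact hzero t ht
    have e : (Zs t *ᵥ vb) (Sum.inr b) = ∑ k, v k * Ftil t k b := by
      show ∑ j, Zs t (Sum.inr b) j * vb j = _
      rw [Fintype.sum_sum_type]
      simp only [hvb, Sum.elim_inl, Sum.elim_inr, Pi.zero_apply, mul_zero,
        Finset.sum_const_zero, add_zero]
      refine Finset.sum_congr rfl fun k _ => ?_
      show (2⁻¹:ℝ) * (Zf t (Sum.inr b) (Sum.inl k) + Zf t (Sum.inl k) (Sum.inr b)) * v k = _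
      have e1 : Zf t (Sum.inr b) (Sum.inl k) = Ftil t k b := rfl
      have e2 : Zf t (Sum.inl k) (Sum.inr b) = Ftil t k b := rfl
      rw [e1, e2]; ring
    rw [hmv] at e
    have h3 : ∑ k, v k * Ftil t k b = 0 := by simpa using e.symm
    rw [hv] at h3
    simpa using h3
  refine ⟨?_, ?_⟩
  · intro t ht
    refine decomp_cols hn TP SP hTdet hSP (Ftil t) ?_
    intro j' hj0 b
    rw [Matrix.mul_apply]
    exact hcore j' hj0 t ht b
  · intro R
    refine decomp_cols hn TP SP hTdet hSP (intM Ftil T * R) ?_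
    intro j' hj0 b
    rw [← Matrix.mul_assoc, Matrix.mul_apply]
    refine Finset.sum_eq_zero fun cc _ => ?_
    have hz : (TP⁻¹ * intM Ftil T) (tailEmb hn j') cc = 0 := by
      rw [Matrix.mul_apply]
      have hstep : ∀ k : Fin n, TP⁻¹ (tailEmb hn j') k * intM Ftil T k cc
          = ∫ s in (0:ℝ)..T, TP⁻¹ (tailEmb hn j') k * Ftil s k cc := by
        intro k
        rw [intervalIntegral.integral_const_mul]
        rfl
      simp only [hstep]
      rw [← intervalIntegral.integral_finset_sum (fun k _ => (hFtint k cc).const_mul _)]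
      have heqon : ∀ s ∈ Set.uIcc (0:ℝ) T,
          (∑ k, TP⁻¹ (tailEmb hn j') k * Ftil s k cc) = (fun _ => (0:ℝ)) s := by
        intro s hs
        rw [Set.uIcc_of_le hT0] at hs
        exact hcore j' hj0 s hs cc
      rw [intervalIntegral.integral_congr heqon, intervalIntegral.integral_zero]
    rw [hz, zero_mul]

lemma lyapAdjM_eq {a b : Type*} [Fintype a] [Fintype b] {q : ℕ}
    (A₁ : Matrix a a ℝ) (A₂ : Matrix b b ℝ)
    (N₁ : Fin q → Matrix a a ℝ) (N₂ : Fin q → Matrix b b ℝ)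
    (K : Matrix (Fin q) (Fin q) ℝ) :
    lyapAdjM A₁ A₂ N₁ N₂ K
      = lyapM A₁ᵀ A₂ᵀ (fun i => (N₁ i)ᵀ) (fun i => (N₂ i)ᵀ) K := by
  funext X
  simp [lyapAdjM, lyapM, Matrix.transpose_transpose]
end main

/-- Theorem 3.5: given diagonalizations `P(T) = 𝒯_P Σ_P 𝒯_Pᵀ`,
`Q(T) = 𝒯_Q Σ_Q 𝒯_Qᵀ` and projection matrices `V = P̃(T) R_V`, `W = Q̃(T) R_W`
(a converged Sylvester fixed point), `F̃(t)`, `V` decompose along the leading columns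
`V_P` of `𝒯_P` up to terms weighted by the truncated diagonal block `Σ_{P,2}`, and
similarly `G̃(t)`, `W` along the leading columns `W_Q` of `𝒯_Q`. -/
theorem stmt_11 {n nh m p q : ℕ} (hn : nh ≤ n) (T : ℝ) (hT : 0 < T)
    (A : Matrix (Fin n) (Fin n) ℝ) (N : Fin q → Matrix (Fin n) (Fin n) ℝ)
    (K : Matrix (Fin q) (Fin q) ℝ) (hK : K.PosSemidef)
    (X₀ : Matrix (Fin n) (Fin m) ℝ) (C : Matrix (Fin p) (Fin n) ℝ)
    (Ahat : Matrix (Fin nh) (Fin nh) ℝ) (Nhat : Fin q → Matrix (Fin nh) (Fin nh) ℝ)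
    (X0hat : Matrix (Fin nh) (Fin m) ℝ) (Chat : Matrix (Fin p) (Fin nh) ℝ)
    (F : ℝ → Matrix (Fin n) (Fin n) ℝ)
    (hF : solvesODE (lyapM A A N N K) F T) (hF0 : F 0 = X₀ * X₀ᵀ)
    (G : ℝ → Matrix (Fin n) (Fin n) ℝ)
    (hG : solvesODE (lyapAdjM A A N N K) G T) (hG0 : G 0 = Cᵀ * C)
    (Ftil : ℝ → Matrix (Fin n) (Fin nh) ℝ)
    (hFtil : solvesODE (lyapM A Ahat N Nhat K) Ftil T)
    (hFtil0 : Ftil 0 = X₀ * X0hatᵀ)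
    (Gtil : ℝ → Matrix (Fin n) (Fin nh) ℝ)
    (hGtil : solvesODE (lyapAdjM A Ahat N Nhat K) Gtil T)
    (hGtil0 : Gtil 0 = Cᵀ * Chat)
    (TP TQ SP SQ : Matrix (Fin n) (Fin n) ℝ)
    (hTP : IsUnit TP) (hTQ : IsUnit TQ) (hSP : SP.IsDiag) (hSQ : SQ.IsDiag)
    (hPdec : intM F T = TP * SP * TPᵀ) (hQdec : intM G T = TQ * SQ * TQᵀ)
    (V W : Matrix (Fin n) (Fin nh) ℝ) (RV RW : Matrix (Fin nh) (Fin nh) ℝ)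
    (hV : V = intM Ftil T * RV) (hW : W = intM Gtil T * RW) :
    (∀ t ∈ Set.Icc (0:ℝ) T,
      ∃ (MF : Matrix (Fin nh) (Fin nh) ℝ) (MF2 : Matrix (Fin (n - nh)) (Fin nh) ℝ),
        Ftil t = TP.submatrix id (Fin.castLE hn) * MF +
          TP.submatrix id (tailEmb hn) * SP.submatrix (tailEmb hn) (tailEmb hn) * MF2)
    ∧ (∃ (MP : Matrix (Fin nh) (Fin nh) ℝ) (MP2 : Matrix (Fin (n - nh)) (Fin nh) ℝ),
        V = TP.submatrix id (Fin.castLE hn) * MP +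
          TP.submatrix id (tailEmb hn) * SP.submatrix (tailEmb hn) (tailEmb hn) * MP2)
    ∧ (∀ t ∈ Set.Icc (0:ℝ) T,
      ∃ (MG : Matrix (Fin nh) (Fin nh) ℝ) (MG2 : Matrix (Fin (n - nh)) (Fin nh) ℝ),
        Gtil t = TQ.submatrix id (Fin.castLE hn) * MG +
          TQ.submatrix id (tailEmb hn) * SQ.submatrix (tailEmb hn) (tailEmb hn) * MG2)
    ∧ (∃ (MQ : Matrix (Fin nh) (Fin nh) ℝ) (MQ2 : Matrix (Fin (n - nh)) (Fin nh) ℝ),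
        W = TQ.submatrix id (Fin.castLE hn) * MQ +
          TQ.submatrix id (tailEmb hn) * SQ.submatrix (tailEmb hn) (tailEmb hn) * MQ2) := by
  obtain ⟨c1, c2⟩ := main_decomp hn hT A N K hK X₀ Ahat Nhat X0hat F hF hF0
    Ftil hFtil hFtil0 TP SP hTP hSP hPdec
  have hG' : solvesODE (lyapM Aᵀ Aᵀ (fun i => (N i)ᵀ) (fun i => (N i)ᵀ) K) G T := by
    rw [← lyapAdjM_eq]; exact hG
  have hGtil' : solvesODE (lyapM Aᵀ Ahatᵀ (fun i => (N i)ᵀ) (fun i => (Nhat i)ᵀ) K) Gtil T := by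
    rw [← lyapAdjM_eq]; exact hGtil
  obtain ⟨c3, c4⟩ := main_decomp hn hT Aᵀ (fun i => (N i)ᵀ) K hK Cᵀ Ahatᵀ
    (fun i => (Nhat i)ᵀ) Chatᵀ G hG' (by rw [hG0, Matrix.transpose_transpose])
    Gtil hGtil' (by rw [hGtil0, Matrix.transpose_transpose]) TQ SQ hTQ hSQ hQdec
  refine ⟨c1, ?_, c3, ?_⟩
  · rw [hV]; exact c2 RV
  · rw [hW]; exact c4 RW
end

section
/- For each parameter tuple θ = (Â, N̂₁, …, N̂_q, X̂₀, Ĉ) for which the Kronecker matrices 𝒦̂_θ = I⊗Â + Â⊗I + Σ_{i,j=1}^q N̂_i⊗N̂_j k_{ij} and 𝒦̃_θ = I⊗A + Â⊗I + Σ_{i,j=1}^q N̂_i⊗N_j k_{ij} are invertible, let P̂_θ, P̃_θ, Q̂_θ, Q̃_θ be the unique solutions of the algebraic equations L̂_θ[P̂] = −X̂₀X̂₀ᵀ, L̃_θ[P̃] = −X₀X̂₀ᵀ, L̂*_θ[Q̂] = −ĈᵀĈ, L̃*_θ[Q̃] = −CᵀĈ, and define ℰ_∞(θ) = tr(Ĉ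 P̂_θ Ĉᵀ) − 2 tr(C P̃_θ Ĉᵀ). Suppose that at θ* all eigenvalues of 𝒦 = I⊗A + A⊗I + Σ N_i⊗N_j k_{ij}, of 𝒦̂_{θ*}, and of 𝒦̃_{θ*} have negative real part (mean square asymptotic stability of the full and reduced systems), and that θ* is a local minimum of ℰ_∞. Then at θ*: (a) Ĉ P̂ = C P̃; (b) Q̂ X̂₀ = Q̃ᵀ X₀; (c) Q̂ P̂ = Q̃ᵀ P̃; (d) for every i = 1,…,q, Q̂ (Σ_{j=1}^q N̂_j k_{ij}) P̂ = Q̃ᵀ (Σ_{j=1}^q N_j k_{ij}) P̃. -/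
open Matrix MeasureTheory Filter
open scoped Kronecker Topology

/-- The space of reduced-order coefficients `θ = (Â, (N̂ᵢ), X̂₀, Ĉ)`. -/
abbrev ThetaSp (nh m p q : ℕ) :=
  Matrix (Fin nh) (Fin nh) ℝ × (Fin q → Matrix (Fin nh) (Fin nh) ℝ) ×
    Matrix (Fin nh) (Fin m) ℝ × Matrix (Fin p) (Fin nh) ℝ

/-- Kronecker matrix `𝒦̂ = I⊗Â + Â⊗I + ∑ kᵢⱼ N̂ᵢ⊗N̂ⱼ` of the reduced system. -/
noncomputable def KhatΘ {nh m p q : ℕ} (K : Matrix (Fin q) (Fin q) ℝ)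
    (θ : ThetaSp nh m p q) : Matrix (Fin nh × Fin nh) (Fin nh × Fin nh) ℝ :=
  kronM θ.1 θ.1 θ.2.1 θ.2.1 K

/-- Mixed Kronecker matrix `𝒦̃ = I⊗A + Â⊗I + ∑ kᵢⱼ N̂ᵢ⊗Nⱼ`. -/
noncomputable def KtilΘ {n nh m p q : ℕ} (A : Matrix (Fin n) (Fin n) ℝ)
    (N : Fin q → Matrix (Fin n) (Fin n) ℝ) (K : Matrix (Fin q) (Fin q) ℝ)
    (θ : ThetaSp nh m p q) : Matrix (Fin nh × Fin n) (Fin nh × Fin n) ℝ :=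
  kronM A θ.1 N θ.2.1 K

/-- `P̂_θ`, the unique solution of `𝓛̂_θ[P̂] = −X̂₀X̂₀ᵀ` (via `vec P̂ = −𝒦̂⁻¹ vec(X̂₀X̂₀ᵀ)`). -/
noncomputable def PhatInfΘ {nh m p q : ℕ} (K : Matrix (Fin q) (Fin q) ℝ)
    (θ : ThetaSp nh m p q) : Matrix (Fin nh) (Fin nh) ℝ :=
  unvecM (-((KhatΘ K θ)⁻¹ *ᵥ vecM (θ.2.2.1 * θ.2.2.1ᵀ)))

/-- `P̃_θ`, the unique solution of `𝓛̃_θ[P̃] = −X₀X̂₀ᵀ`. -/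
noncomputable def PtilInfΘ {n nh m p q : ℕ} (A : Matrix (Fin n) (Fin n) ℝ)
    (N : Fin q → Matrix (Fin n) (Fin n) ℝ) (K : Matrix (Fin q) (Fin q) ℝ)
    (X₀ : Matrix (Fin n) (Fin m) ℝ) (θ : ThetaSp nh m p q) :
    Matrix (Fin n) (Fin nh) ℝ :=
  unvecM (-((KtilΘ A N K θ)⁻¹ *ᵥ vecM (X₀ * θ.2.2.1ᵀ)))

/-- `Q̂_θ`, the unique solution of `𝓛̂*_θ[Q̂] = −ĈᵀĈ`. -/
noncomputable def QhatInfΘ {nh m p q : ℕ} (K : Matrix (Fin q) (Fin q) ℝ)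
    (θ : ThetaSp nh m p q) : Matrix (Fin nh) (Fin nh) ℝ :=
  unvecM (-(((KhatΘ K θ)ᵀ)⁻¹ *ᵥ vecM (θ.2.2.2ᵀ * θ.2.2.2)))

/-- `Q̃_θ`, the unique solution of `𝓛̃*_θ[Q̃] = −CᵀĈ`. -/
noncomputable def QtilInfΘ {n nh m p q : ℕ} (A : Matrix (Fin n) (Fin n) ℝ)
    (N : Fin q → Matrix (Fin n) (Fin n) ℝ) (K : Matrix (Fin q) (Fin q) ℝ)
    (C : Matrix (Fin p) (Fin n) ℝ) (θ : ThetaSp nh m p q) :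
    Matrix (Fin n) (Fin nh) ℝ :=
  unvecM (-(((KtilΘ A N K θ)ᵀ)⁻¹ *ᵥ vecM (Cᵀ * θ.2.2.2)))

/-- The limit error measure `ℰ_∞(θ) = tr(Ĉ P̂_θ Ĉᵀ) − 2 tr(C P̃_θ Ĉᵀ)`. -/
noncomputable def EInfΘ {n nh m p q : ℕ} (A : Matrix (Fin n) (Fin n) ℝ)
    (N : Fin q → Matrix (Fin n) (Fin n) ℝ) (K : Matrix (Fin q) (Fin q) ℝ)
    (X₀ : Matrix (Fin n) (Fin m) ℝ) (C : Matrix (Fin p) (Fin n) ℝ)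
    (θ : ThetaSp nh m p q) : ℝ :=
  (θ.2.2.2 * PhatInfΘ K θ * θ.2.2.2ᵀ).trace -
    2 * (C * PtilInfΘ A N K X₀ θ * θ.2.2.2ᵀ).trace

/-- All eigenvalues of a real square matrix have negative real part. -/
def specNeg {ι : Type*} [Fintype ι] [DecidableEq ι] (M : Matrix ι ι ℝ) : Prop :=
  ∀ μ ∈ spectrum ℂ (M.map (algebraMap ℝ ℂ)), μ.re < 0
section Stmt12Helpers

open Matrix Filter

variable {a b c d ι : Type*}

/-- entrywise `HasDerivAt` for a matrix-valued curve -/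
def HDM (F : ℝ → Matrix a b ℝ) (F' : Matrix a b ℝ) (t : ℝ) : Prop :=
  ∀ i j, HasDerivAt (fun s => F s i j) (F' i j) t

/-- entrywise `HasDerivAt` for a vector-valued curve -/
def HDV (v : ℝ → ι → ℝ) (v' : ι → ℝ) (t : ℝ) : Prop :=
  ∀ i, HasDerivAt (fun s => v s i) (v' i) t

theorem HDM.congr_deriv {F : ℝ → Matrix a b ℝ} {F₁ F₂ : Matrix a b ℝ} {t : ℝ}
    (h : HDM F F₁ t) (e : F₁ = F₂) : HDM F F₂ t := e ▸ h

theorem hd_congr {f : ℝ → ℝ} {a₁ a₂ x : ℝ} (h : HasDerivAt f a₁ x) (e : a₁ = a₂) :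
    HasDerivAt f a₂ x := e ▸ h

theorem HDM.const (M : Matrix a b ℝ) (t : ℝ) : HDM (fun _ => M) 0 t := fun i j => by
  simpa using hasDerivAt_const t (M i j)

theorem HDM.line (M δ : Matrix a b ℝ) (t : ℝ) : HDM (fun s => M + s • δ) δ t := fun i j => by
  have h : HasDerivAt (fun s : ℝ => M i j + s * δ i j) (δ i j) t := by
    simpa using ((hasDerivAt_id t).mul_const (δ i j)).const_add (M i j)
  simpa [Matrix.add_apply, Matrix.smul_apply, smul_eq_mul] using h

theorem HDM.add {F G : ℝ → Matrix a b ℝ} {F' G' : Matrix a b ℝ} {t : ℝ}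
    (hF : HDM F F' t) (hG : HDM G G' t) : HDM (fun s => F s + G s) (F' + G') t := fun i j => by
  simpa [Matrix.add_apply] using (hF i j).fun_add (hG i j)

theorem HDM.smulc {F : ℝ → Matrix a b ℝ} {F' : Matrix a b ℝ} {t : ℝ} (c : ℝ)
    (hF : HDM F F' t) : HDM (fun s => c • F s) (c • F') t := fun i j => by
  simpa [Matrix.smul_apply, smul_eq_mul] using (hF i j).const_mul c

theorem HDM.transpose {F : ℝ → Matrix a b ℝ} {F' : Matrix a b ℝ} {t : ℝ}
    (hF : HDM F F' t) : HDM (fun s => (F s)ᵀ) F'ᵀ t := fun i j => hF j i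

theorem HDM.sum {s : Finset ι} {F : ι → ℝ → Matrix a b ℝ} {F' : ι → Matrix a b ℝ} {t : ℝ}
    (h : ∀ i ∈ s, HDM (F i) (F' i) t) :
    HDM (fun x => ∑ i ∈ s, F i x) (∑ i ∈ s, F' i) t := fun i j => by
  simp only [Matrix.sum_apply]
  exact HasDerivAt.fun_sum fun k hk => h k hk i j

theorem HDM.mul [Fintype b] {F : ℝ → Matrix a b ℝ} {G : ℝ → Matrix b c ℝ}
    {F' : Matrix a b ℝ} {G' : Matrix b c ℝ} {t : ℝ}
    (hF : HDM F F' t) (hG : HDM G G' t) :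
    HDM (fun s => F s * G s) (F' * G t + F t * G') t := fun i j => by
  have h := HasDerivAt.fun_sum (u := Finset.univ)
    (fun k _ => ((hF i k).mul (hG k j) :
      HasDerivAt (fun s => F s i k * G s k j) (F' i k * G t k j + F t i k * G' k j) t))
  simp only [Matrix.mul_apply, Matrix.add_apply, Finset.sum_add_distrib] at h ⊢
  exact h

theorem HDM.kron [Fintype b] {F : ℝ → Matrix a b ℝ} {G : ℝ → Matrix c d ℝ}
    {F' : Matrix a b ℝ} {G' : Matrix c d ℝ} {t : ℝ}
    (hF : HDM F F' t) (hG : HDM G G' t) :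
    HDM (fun s => F s ⊗ₖ G s) (F' ⊗ₖ G t + F t ⊗ₖ G') t := by
  rintro ⟨i1, i2⟩ ⟨j1, j2⟩
  simpa [Matrix.kroneckerMap_apply, Matrix.add_apply] using (hF i1 j1).fun_mul (hG i2 j2)

theorem HDV.of_HDM {F : ℝ → Matrix a b ℝ} {F' : Matrix a b ℝ} {t : ℝ}
    (hF : HDM F F' t) : HDV (fun s => vecM (F s)) (vecM F') t := fun p => hF p.2 p.1

theorem HDV.neg {v : ℝ → ι → ℝ} {v' : ι → ℝ} {t : ℝ} (hv : HDV v v' t) :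
    HDV (fun s => -(v s)) (-v') t := fun i => by
  simpa [Pi.neg_apply] using (hv i).fun_neg

theorem HDM.mulVec [Fintype b] {M : ℝ → Matrix a b ℝ} {M' : Matrix a b ℝ}
    {v : ℝ → b → ℝ} {v' : b → ℝ} {t : ℝ}
    (hM : HDM M M' t) (hv : HDV v v' t) :
    HDV (fun s => M s *ᵥ v s) (M' *ᵥ v t + M t *ᵥ v') t := fun i => by
  have h := HasDerivAt.fun_sum (u := Finset.univ)
    (fun k _ => ((hM i k).mul (hv k) :
      HasDerivAt (fun s => M s i k * v s k) (M' i k * v t k + M t i k * v' k) t))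
  simp only [Matrix.mulVec, dotProduct, Pi.add_apply, Finset.sum_add_distrib] at h ⊢
  exact h

theorem HDV.dot [Fintype ι] {u v : ℝ → ι → ℝ} {u' v' : ι → ℝ} {t : ℝ}
    (hu : HDV u u' t) (hv : HDV v v' t) :
    HasDerivAt (fun s => u s ⬝ᵥ v s) (u' ⬝ᵥ v t + u t ⬝ᵥ v') t := by
  have h := HasDerivAt.fun_sum (u := Finset.univ)
    (fun k _ => ((hu k).mul (hv k) :
      HasDerivAt (fun s => u s k * v s k) (u' k * v t k + u t k * v' k) t))
  simp only [dotProduct, Finset.sum_add_distrib] at h ⊢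
  exact h

theorem sum_mulVecR [Fintype b] {s : Finset ι} (M : ι → Matrix a b ℝ) (v : b → ℝ) :
    (∑ i ∈ s, M i) *ᵥ v = ∑ i ∈ s, (M i *ᵥ v) := by
  induction s using Finset.cons_induction with
  | empty => simp
  | cons x s hx ih => simp [Finset.sum_cons, Matrix.add_mulVec, ih]

theorem HDM.inv [Fintype a] [DecidableEq a] {M : ℝ → Matrix a a ℝ} {M' : Matrix a a ℝ}
    (hM : HDM M M' 0) (hu : IsUnit ((M 0).det)) :
    HDM (fun s => (M s)⁻¹) (-((M 0)⁻¹ * M' * (M 0)⁻¹)) 0 := by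
  have hMc : ContinuousAt M 0 :=
    continuousAt_pi.2 fun i => continuousAt_pi.2 fun j => (hM i j).continuousAt
  have hdet : ContinuousAt (fun s => (M s).det) 0 :=
    (continuous_id.matrix_det).continuousAt.comp hMc
  have hne : (M 0).det ≠ 0 := hu.ne_zero
  have hEv : ∀ᶠ s in nhds (0:ℝ), IsUnit ((M s).det) := by
    filter_upwards [hdet.eventually_ne hne] with s hs using isUnit_iff_ne_zero.2 hs
  have hInvC : ContinuousAt (fun s => (M s)⁻¹) 0 := by
    refine (continuousAt_matrix_inv (M 0) ?_).comp hMc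
    rw [Ring.inverse_eq_inv']
    exact continuousAt_inv₀ hne
  intro i j
  rw [hasDerivAt_iff_tendsto_slope]
  have hslope : ∀ k l, Tendsto (fun s : ℝ => s⁻¹ * (M s k l - M 0 k l)) (nhdsWithin 0 {(0:ℝ)}ᶜ)
      (nhds (M' k l)) := by
    intro k l
    refine (hasDerivAt_iff_tendsto_slope.1 (hM k l)).congr fun s => ?_
    rw [slope_def_field]
    ring
  have hinvE : ∀ (l j' : a), Tendsto (fun s => (M s)⁻¹ l j') (nhdsWithin 0 {(0:ℝ)}ᶜ)
      (nhds ((M 0)⁻¹ l j')) := by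
    intro l j'
    have hc : ContinuousAt (fun s => (M s)⁻¹ l j') 0 :=
      ((continuous_apply j').continuousAt).comp
        (((continuous_apply (A := fun _ : a => a → ℝ) l).continuousAt).comp hInvC)
    exact hc.tendsto.mono_left nhdsWithin_le_nhds
  have hS : Tendsto (fun s => ((-(M 0)⁻¹) * (s⁻¹ • (M s - M 0)) * (M s)⁻¹) i j)
      (nhdsWithin 0 {(0:ℝ)}ᶜ) (nhds (((-(M 0)⁻¹) * M' * (M 0)⁻¹) i j)) := by
    simp only [Matrix.mul_apply, Matrix.smul_apply, Matrix.sub_apply, smul_eq_mul]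
    refine tendsto_finset_sum _ fun l _ => Tendsto.mul ?_ (hinvE l j)
    exact tendsto_finset_sum _ fun k _ => tendsto_const_nhds.mul (hslope k l)
  have hfin : (-((M 0)⁻¹ * M' * (M 0)⁻¹)) i j = ((-(M 0)⁻¹) * M' * (M 0)⁻¹) i j := by
    rw [Matrix.neg_mul, Matrix.neg_mul]
  rw [hfin]
  refine hS.congr' ?_
  filter_upwards [eventually_nhdsWithin_of_eventually_nhds hEv] with s hsU
  have h0 : (M s)⁻¹ - (M 0)⁻¹ = -((M 0)⁻¹ * (M s - M 0) * (M s)⁻¹) := by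
    have e1 : (M 0)⁻¹ * (M s - M 0) * (M s)⁻¹ = (M 0)⁻¹ - (M s)⁻¹ := by
      rw [Matrix.mul_sub, Matrix.sub_mul, Matrix.mul_assoc _ (M s) _,
        Matrix.mul_nonsing_inv _ hsU, Matrix.mul_one, Matrix.nonsing_inv_mul _ hu,
        Matrix.one_mul]
    rw [e1, neg_sub]
  have hmat : ((-(M 0)⁻¹) * (s⁻¹ • (M s - M 0)) * (M s)⁻¹) = s⁻¹ • ((M s)⁻¹ - (M 0)⁻¹) := by
    rw [h0]
    simp only [Matrix.mul_smul, Matrix.smul_mul, Matrix.neg_mul, smul_neg, neg_neg]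
  rw [hmat]
  rw [slope_def_field]
  simp only [Matrix.smul_apply, Matrix.sub_apply, smul_eq_mul]
  ring

end Stmt12Helpers
section Stmt12Alg

open Matrix

variable {a b c d e ι : Type*}

theorem vecM_add (X Y : Matrix a b ℝ) : vecM (X + Y) = vecM X + vecM Y := rfl
theorem vecM_zero : vecM (0 : Matrix a b ℝ) = 0 := rfl
theorem vecM_sum {s : Finset ι} (F : ι → Matrix a b ℝ) :
    vecM (∑ i ∈ s, F i) = ∑ i ∈ s, vecM (F i) := by
  funext p
  simp [vecM, Matrix.sum_apply, Finset.sum_apply]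

theorem kron_mulVec [Fintype a] [Fintype b] (M₂ : Matrix d b ℝ) (M₁ : Matrix c a ℝ)
    (X : Matrix a b ℝ) : (M₂ ⊗ₖ M₁) *ᵥ vecM X = vecM (M₁ * X * M₂ᵀ) := by
  funext pp
  obtain ⟨j, i⟩ := pp
  simp only [Matrix.mulVec, dotProduct, vecM, Matrix.kroneckerMap_apply,
    Matrix.mul_apply, Matrix.transpose_apply, Fintype.sum_prod_type, Finset.sum_mul]
  exact Finset.sum_congr rfl fun l _ => Finset.sum_congr rfl fun k _ => by ring

theorem vecM_dot [Fintype a] [Fintype b] (Y X : Matrix a b ℝ) :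
    vecM Y ⬝ᵥ vecM X = (Yᵀ * X).trace := by
  simp only [dotProduct, vecM, Matrix.trace, Matrix.diag, Matrix.mul_apply,
    Matrix.transpose_apply, Fintype.sum_prod_type]

theorem dot_std [Fintype a] [Fintype b] [DecidableEq a] [DecidableEq b]
    (Y : Matrix a b ℝ) (r : a) (s : b) :
    vecM Y ⬝ᵥ vecM (Matrix.single r s 1) = Y r s := by
  simp [dotProduct, vecM, Matrix.single, Fintype.sum_prod_type, ite_and]

theorem P1 [Fintype a] [Fintype b] [Fintype c] (Q : Matrix a b ℝ) (W : Matrix a c ℝ)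
    (E : Matrix b c ℝ) : vecM Q ⬝ᵥ vecM (W * Eᵀ) = vecM (Qᵀ * W) ⬝ᵥ vecM E := by
  rw [vecM_dot, vecM_dot, ← Matrix.mul_assoc, Matrix.trace_mul_comm, ← Matrix.trace_transpose,
    Matrix.transpose_mul, Matrix.transpose_mul, Matrix.transpose_transpose,
    Matrix.transpose_transpose, Matrix.mul_assoc]

theorem P2 [Fintype a] [Fintype b] [Fintype c] (Q : Matrix a b ℝ) (E : Matrix a c ℝ)
    (W : Matrix c b ℝ) : vecM Q ⬝ᵥ vecM (E * W) = vecM (Q * Wᵀ) ⬝ᵥ vecM E := by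
  rw [vecM_dot, vecM_dot, Matrix.transpose_mul, Matrix.transpose_transpose,
    ← Matrix.mul_assoc, Matrix.trace_mul_cycle]

theorem P4 [Fintype a] [Fintype b] [Fintype c] (Q : Matrix a b ℝ) (E : Matrix c a ℝ)
    (W : Matrix c b ℝ) : vecM Q ⬝ᵥ vecM (Eᵀ * W) = vecM (W * Qᵀ) ⬝ᵥ vecM E := by
  rw [vecM_dot, vecM_dot, Matrix.transpose_mul, Matrix.transpose_transpose,
    ← Matrix.trace_transpose, Matrix.transpose_mul, Matrix.transpose_mul,
    Matrix.transpose_transpose, Matrix.mul_assoc, Matrix.trace_mul_cycle,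
    Matrix.transpose_transpose, Matrix.trace_mul_comm]

theorem P5 [Fintype a] [Fintype b] [Fintype c] (Q : Matrix a b ℝ) (W : Matrix c a ℝ)
    (E : Matrix c b ℝ) : vecM Q ⬝ᵥ vecM (Wᵀ * E) = vecM (W * Q) ⬝ᵥ vecM E := by
  rw [vecM_dot, vecM_dot, Matrix.transpose_mul, ← Matrix.mul_assoc]

theorem trace_unvec [Fintype a] [Fintype b] [Fintype c] (C1 : Matrix c a ℝ)
    (C2 : Matrix c b ℝ) (v : b × a → ℝ) :
    (C1 * unvecM v * C2ᵀ).trace = vecM (C1ᵀ * C2) ⬝ᵥ v := by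
  simp only [Matrix.trace, Matrix.diag, Matrix.mul_apply, Matrix.transpose_apply,
    dotProduct, vecM, unvecM, Matrix.of_apply, Fintype.sum_prod_type,
    Finset.sum_mul, Finset.mul_sum]
  rw [Finset.sum_comm]
  refine Finset.sum_congr rfl fun l _ => ?_
  rw [Finset.sum_comm]
  refine Finset.sum_congr rfl fun i _ => Finset.sum_congr rfl fun k _ => by ring

theorem specNeg_isUnit {ι : Type*} [Fintype ι] [DecidableEq ι] {M : Matrix ι ι ℝ}
    (h : specNeg M) : IsUnit M.det := by
  rw [isUnit_iff_ne_zero]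
  intro hdet
  have h0 : (0:ℂ) ∈ spectrum ℂ (M.map (algebraMap ℝ ℂ)) := by
    rw [spectrum.zero_mem_iff, Matrix.isUnit_iff_isUnit_det, ← RingHom.mapMatrix_apply,
      ← RingHom.map_det]
    simp [hdet]
  simpa using h 0 h0

theorem kronM_mulVec [Fintype a] [Fintype b] [DecidableEq a] [DecidableEq b] {q : ℕ}
    (A₁ : Matrix a a ℝ) (A₂ : Matrix b b ℝ) (N₁ : Fin q → Matrix a a ℝ)
    (N₂ : Fin q → Matrix b b ℝ) (K : Matrix (Fin q) (Fin q) ℝ) (X : Matrix a b ℝ) :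
    kronM A₁ A₂ N₁ N₂ K *ᵥ vecM X =
      vecM (A₁ * X + X * A₂ᵀ + ∑ i, ∑ j, K i j • (N₁ j * X * (N₂ i)ᵀ)) := by
  have vecM_smul : ∀ (cc : ℝ) (Z : Matrix a b ℝ), vecM (cc • Z) = cc • vecM Z := fun _ _ => rfl
  unfold kronM
  simp only [Matrix.add_mulVec, sum_mulVecR, Matrix.smul_mulVec, kron_mulVec,
    vecM_add, vecM_sum, vecM_smul, Matrix.transpose_one, Matrix.mul_one, Matrix.one_mul]

theorem kronM_transpose [Fintype a] [Fintype b] [DecidableEq a] [DecidableEq b] {q : ℕ}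
    (A₁ : Matrix a a ℝ) (A₂ : Matrix b b ℝ) (N₁ : Fin q → Matrix a a ℝ)
    (N₂ : Fin q → Matrix b b ℝ) (K : Matrix (Fin q) (Fin q) ℝ) :
    (kronM A₁ A₂ N₁ N₂ K)ᵀ =
      kronM A₁ᵀ A₂ᵀ (fun i => (N₁ i)ᵀ) (fun i => (N₂ i)ᵀ) K := by
  unfold kronM
  simp only [Matrix.transpose_add, Matrix.transpose_sum, Matrix.transpose_smul,
    ← Matrix.kroneckerMap_transpose, Matrix.transpose_one]

end Stmt12Alg
section Stmt12Sym

open Matrix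

theorem sym_solution {a : Type*} [Fintype a] [DecidableEq a] {q : ℕ}
    (A : Matrix a a ℝ) (Nn : Fin q → Matrix a a ℝ) (K : Matrix (Fin q) (Fin q) ℝ)
    (hK : K.IsSymm) (hu : IsUnit (kronM A A Nn Nn K).det) (W : Matrix a a ℝ) (hW : Wᵀ = W)
    (P : Matrix a a ℝ) (hvP : vecM P = -((kronM A A Nn Nn K)⁻¹ *ᵥ vecM W)) : Pᵀ = P := by
  have hPv : kronM A A Nn Nn K *ᵥ vecM P = -(vecM W) := by
    rw [hvP, Matrix.mulVec_neg, Matrix.mulVec_mulVec, Matrix.mul_nonsing_inv _ hu,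
      Matrix.one_mulVec]
  have hL : A * P + P * Aᵀ + ∑ i, ∑ j, K i j • (Nn j * P * (Nn i)ᵀ) = -W :=
    congrArg unvecM ((kronM_mulVec A A Nn Nn K P).symm.trans hPv)
  have hsum : (∑ i, ∑ j, K i j • (Nn j * P * (Nn i)ᵀ))ᵀ
      = ∑ i, ∑ j, K i j • (Nn j * Pᵀ * (Nn i)ᵀ) := by
    rw [Matrix.transpose_sum]
    have hin : ∀ i, (∑ j, K i j • (Nn j * P * (Nn i)ᵀ))ᵀ
        = ∑ j, K i j • (Nn i * (Pᵀ * (Nn j)ᵀ)) := by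
      intro i
      rw [Matrix.transpose_sum]
      refine Finset.sum_congr rfl fun j _ => ?_
      rw [Matrix.transpose_smul, Matrix.transpose_mul, Matrix.transpose_mul,
        Matrix.transpose_transpose]
    simp only [hin]
    rw [Finset.sum_comm]
    refine Finset.sum_congr rfl fun i _ => Finset.sum_congr rfl fun j _ => ?_
    rw [hK.apply i j, Matrix.mul_assoc]
  have hLT : A * Pᵀ + Pᵀ * Aᵀ + ∑ i, ∑ j, K i j • (Nn j * Pᵀ * (Nn i)ᵀ) = -W := by
    have h2 := congrArg Matrix.transpose hL
    rw [Matrix.transpose_add, Matrix.transpose_add, Matrix.transpose_mul, Matrix.transpose_mul,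
      Matrix.transpose_transpose, hsum, Matrix.transpose_neg, hW,
      add_comm (Pᵀ * Aᵀ) (A * Pᵀ)] at h2
    exact h2
  have hPvT : kronM A A Nn Nn K *ᵥ vecM Pᵀ = -(vecM W) := by
    rw [kronM_mulVec, hLT]
    rfl
  have hinj : (kronM A A Nn Nn K)⁻¹ *ᵥ (kronM A A Nn Nn K *ᵥ vecM Pᵀ)
      = (kronM A A Nn Nn K)⁻¹ *ᵥ (kronM A A Nn Nn K *ᵥ vecM P) := by rw [hPv, hPvT]
  rw [Matrix.mulVec_mulVec, Matrix.mulVec_mulVec, Matrix.nonsing_inv_mul _ hu,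
    Matrix.one_mulVec, Matrix.one_mulVec] at hinj
  exact congrArg unvecM hinj

end Stmt12Sym
section Stmt12Extra
open Matrix

theorem dot_sumR {ι κ : Type*} [Fintype κ] {s : Finset ι} (u : κ → ℝ) (v : ι → κ → ℝ) :
    u ⬝ᵥ (∑ i ∈ s, v i) = ∑ i ∈ s, u ⬝ᵥ v i := by
  induction s using Finset.cons_induction with
  | empty => simp
  | cons x s hx ih => simp [Finset.sum_cons, dotProduct_add, ih]

theorem P1b {a b c d : Type*} [Fintype a] [Fintype b] [Fintype c] [Fintype d]
    (Q : Matrix a b ℝ) (U : Matrix a d ℝ) (W : Matrix d c ℝ) (E : Matrix b c ℝ) :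
    vecM Q ⬝ᵥ vecM (U * (W * Eᵀ)) = vecM (Qᵀ * (U * W)) ⬝ᵥ vecM E := by
  rw [← Matrix.mul_assoc, P1]

theorem P4c {a b c : Type*} [Fintype a] [Fintype b] [Fintype c]
    (Q : Matrix a b ℝ) (E : Matrix c a ℝ) (W : Matrix c b ℝ) :
    vecM (Eᵀ * W) ⬝ᵥ vecM Q = vecM (W * Qᵀ) ⬝ᵥ vecM E := by
  rw [dotProduct_comm, P4]

theorem P5c {a b c : Type*} [Fintype a] [Fintype b] [Fintype c]
    (Q : Matrix a b ℝ) (W : Matrix c a ℝ) (E : Matrix c b ℝ) :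
    vecM (Wᵀ * E) ⬝ᵥ vecM Q = vecM (W * Q) ⬝ᵥ vecM E := by
  rw [dotProduct_comm, P5]

end Stmt12Extra
/-- Theorem 4.1: at a local minimum `θ*` of the limit error measure
`ℰ_∞`, under mean square asymptotic stability of the full and reduced systems (all
eigenvalues of `𝒦`, `𝒦̂`, `𝒦̃` have negative real part), the limit optimality
conditions (a)–(d) hold. -/
theorem stmt_12 {n nh m p q : ℕ}
    (A : Matrix (Fin n) (Fin n) ℝ) (N : Fin q → Matrix (Fin n) (Fin n) ℝ)
    (K : Matrix (Fin q) (Fin q) ℝ) (hK : K.IsSymm)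
    (X₀ : Matrix (Fin n) (Fin m) ℝ) (C : Matrix (Fin p) (Fin n) ℝ)
    (θs : ThetaSp nh m p q)
    (hstabFull : specNeg (kronM A A N N K))
    (hstabHat : specNeg (KhatΘ K θs))
    (hstabTil : specNeg (KtilΘ A N K θs))
    (hmin : IsLocalMin (EInfΘ A N K X₀ C) θs) :
    θs.2.2.2 * PhatInfΘ K θs = C * PtilInfΘ A N K X₀ θs
    ∧ QhatInfΘ K θs * θs.2.2.1 = (QtilInfΘ A N K C θs)ᵀ * X₀
    ∧ QhatInfΘ K θs * PhatInfΘ K θs = (QtilInfΘ A N K C θs)ᵀ * PtilInfΘ A N K X₀ θs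
    ∧ ∀ i : Fin q,
        QhatInfΘ K θs * (∑ j, K i j • θs.2.1 j) * PhatInfΘ K θs =
          (QtilInfΘ A N K C θs)ᵀ * (∑ j, K i j • N j) * PtilInfΘ A N K X₀ θs := by
  classical
  have huh : IsUnit (KhatΘ K θs).det := specNeg_isUnit hstabHat
  have hut : IsUnit (KtilΘ A N K θs).det := specNeg_isUnit hstabTil
  -- ℰ_∞ in dot-product form
  have E_eq : ∀ θ : ThetaSp nh m p q, EInfΘ A N K X₀ C θ =
      vecM (θ.2.2.2ᵀ * θ.2.2.2) ⬝ᵥ (-((KhatΘ K θ)⁻¹ *ᵥ vecM (θ.2.2.1 * θ.2.2.1ᵀ)))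
        - 2 * (vecM (Cᵀ * θ.2.2.2) ⬝ᵥ (-((KtilΘ A N K θ)⁻¹ *ᵥ vecM (X₀ * θ.2.2.1ᵀ)))) := by
    intro θ
    unfold EInfΘ PhatInfΘ PtilInfΘ
    rw [trace_unvec, trace_unvec]
  -- symmetry of P̂ and Q̂
  have hPh : (PhatInfΘ K θs)ᵀ = PhatInfΘ K θs := by
    refine sym_solution θs.1 θs.2.1 K hK huh (θs.2.2.1 * θs.2.2.1ᵀ) ?_ _ rfl
    rw [Matrix.transpose_mul, Matrix.transpose_transpose]
  have hQh : (QhatInfΘ K θs)ᵀ = QhatInfΘ K θs := by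
    refine sym_solution θs.1ᵀ (fun i => (θs.2.1 i)ᵀ) K hK ?_ (θs.2.2.2ᵀ * θs.2.2.2) ?_ _ ?_
    · rw [← kronM_transpose, Matrix.det_transpose]
      exact huh
    · rw [Matrix.transpose_mul, Matrix.transpose_transpose]
    · show vecM (QhatInfΘ K θs) = _
      rw [← kronM_transpose]
      rfl
  -- the key first-order condition, for every direction δ
  have keyD : ∀ δ : ThetaSp nh m p q,
      vecM (δ.2.2.2ᵀ * θs.2.2.2 + θs.2.2.2ᵀ * δ.2.2.2) ⬝ᵥ vecM (PhatInfΘ K θs)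
      + vecM (QhatInfΘ K θs) ⬝ᵥ
          (((1 : Matrix (Fin nh) (Fin nh) ℝ) ⊗ₖ δ.1 + δ.1 ⊗ₖ (1 : Matrix (Fin nh) (Fin nh) ℝ)
            + ∑ i, ∑ j, K i j • (δ.2.1 i ⊗ₖ θs.2.1 j + θs.2.1 i ⊗ₖ δ.2.1 j))
              *ᵥ vecM (PhatInfΘ K θs)
           + vecM (δ.2.2.1 * θs.2.2.1ᵀ + θs.2.2.1 * δ.2.2.1ᵀ))
      - 2 * (vecM (Cᵀ * δ.2.2.2) ⬝ᵥ vecM (PtilInfΘ A N K X₀ θs)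
          + vecM (QtilInfΘ A N K C θs) ⬝ᵥ
              ((δ.1 ⊗ₖ (1 : Matrix (Fin n) (Fin n) ℝ)
                + ∑ i, ∑ j, K i j • (δ.2.1 i ⊗ₖ N j)) *ᵥ vecM (PtilInfΘ A N K X₀ θs)
               + vecM (X₀ * δ.2.2.1ᵀ))) = 0 := by
    intro δ
    -- curves
    have hcA : HDM (fun t : ℝ => (θs + t • δ).1) δ.1 0 := HDM.line θs.1 δ.1 0
    have hcN : ∀ i, HDM (fun t : ℝ => (θs + t • δ).2.1 i) (δ.2.1 i) 0 :=
      fun i => HDM.line (θs.2.1 i) (δ.2.1 i) 0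
    have hcX : HDM (fun t : ℝ => (θs + t • δ).2.2.1) δ.2.2.1 0 := HDM.line _ _ 0
    have hcC : HDM (fun t : ℝ => (θs + t • δ).2.2.2) δ.2.2.2 0 := HDM.line _ _ 0
    have hKhd : HDM (fun t : ℝ => KhatΘ K (θs + t • δ))
        ((1 : Matrix (Fin nh) (Fin nh) ℝ) ⊗ₖ δ.1 + δ.1 ⊗ₖ (1 : Matrix (Fin nh) (Fin nh) ℝ)
          + ∑ i, ∑ j, K i j • (δ.2.1 i ⊗ₖ θs.2.1 j + θs.2.1 i ⊗ₖ δ.2.1 j)) 0 := by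
      refine HDM.congr_deriv ((((HDM.const 1 0).kron hcA).add (hcA.kron (HDM.const 1 0))).add
        (HDM.sum fun i _ => HDM.sum fun j _ => HDM.smulc (K i j) ((hcN i).kron (hcN j)))) ?_
      simp [smul_add]
    have hKtd : HDM (fun t : ℝ => KtilΘ A N K (θs + t • δ))
        (δ.1 ⊗ₖ (1 : Matrix (Fin n) (Fin n) ℝ) + ∑ i, ∑ j, K i j • (δ.2.1 i ⊗ₖ N j)) 0 := by
      have hsum : HDM (fun t : ℝ => ∑ i, ∑ j, K i j • ((θs + t • δ).2.1 i ⊗ₖ N j))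
          (∑ i : Fin q, ∑ j : Fin q, K i j •
            (δ.2.1 i ⊗ₖ N j + (θs + (0:ℝ) • δ).2.1 i ⊗ₖ (0 : Matrix (Fin n) (Fin n) ℝ))) 0 :=
        HDM.sum fun i _ => HDM.sum fun j _ => HDM.smulc (K i j) ((hcN i).kron (HDM.const (N j) 0))
      refine HDM.congr_deriv (((HDM.const ((1 : Matrix (Fin nh) (Fin nh) ℝ) ⊗ₖ A) 0).add
        (hcA.kron (HDM.const (1 : Matrix (Fin n) (Fin n) ℝ) 0))).add hsum) ?_
      simp
    have hWh : HDM (fun t : ℝ => (θs + t • δ).2.2.1 * ((θs + t • δ).2.2.1)ᵀ)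
        (δ.2.2.1 * θs.2.2.1ᵀ + θs.2.2.1 * δ.2.2.1ᵀ) 0 := by
      refine HDM.congr_deriv (hcX.mul hcX.transpose) ?_
      simp
    have hWt : HDM (fun t : ℝ => X₀ * ((θs + t • δ).2.2.1)ᵀ) (X₀ * δ.2.2.1ᵀ) 0 := by
      refine HDM.congr_deriv ((HDM.const X₀ 0).mul hcX.transpose) ?_
      simp
    have hIh : IsUnit ((fun t : ℝ => KhatΘ K (θs + t • δ)) 0).det := by simpa using huh
    have hIt : IsUnit ((fun t : ℝ => KtilΘ A N K (θs + t • δ)) 0).det := by simpa using hut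
    have hall := ((HDV.of_HDM (hcC.transpose.mul hcC)).dot
        (HDV.neg ((hKhd.inv hIh).mulVec (HDV.of_HDM hWh)))).sub
      (((HDV.of_HDM ((HDM.const Cᵀ 0).mul hcC)).dot
        (HDV.neg ((hKtd.inv hIt).mulVec (HDV.of_HDM hWt)))).const_mul 2)
    have hlm : IsLocalMin (fun t : ℝ => EInfΘ A N K X₀ C (θs + t • δ)) 0 := by
      have hg : ContinuousAt (fun t : ℝ => θs + t • δ) 0 := by fun_prop
      have h0 : IsLocalMin (EInfΘ A N K X₀ C) ((fun t : ℝ => θs + t • δ) 0) := by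
        have he : (fun t : ℝ => θs + t • δ) 0 = θs := by simp
        rw [he]
        exact hmin
      simpa [Function.comp_def] using
        IsLocalMin.comp_continuous (g := fun t : ℝ => θs + t • δ) h0 hg
    have hD := hall.congr_of_eventuallyEq
      (f₁ := fun t : ℝ => EInfΘ A N K X₀ C (θs + t • δ))
      (Filter.Eventually.of_forall fun t => E_eq (θs + t • δ))
    have hz : deriv (fun t : ℝ => EInfΘ A N K X₀ C (θs + t • δ)) 0 = 0 := hlm.deriv_eq_zero
    rw [hD.deriv] at hz
    refine Eq.trans ?_ hz
    -- identify the stated expression with the raw derivative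
    have hflipH : ∀ z, vecM (QhatInfΘ K θs) ⬝ᵥ z
        = -(vecM (θs.2.2.2ᵀ * θs.2.2.2) ⬝ᵥ ((KhatΘ K θs)⁻¹ *ᵥ z)) := by
      intro z
      show (-(((KhatΘ K θs)ᵀ)⁻¹ *ᵥ vecM (θs.2.2.2ᵀ * θs.2.2.2))) ⬝ᵥ z = _
      rw [← Matrix.transpose_nonsing_inv, Matrix.mulVec_transpose, neg_dotProduct,
        ← dotProduct_mulVec]
    have hflipT : ∀ z, vecM (QtilInfΘ A N K C θs) ⬝ᵥ z
        = -(vecM (Cᵀ * θs.2.2.2) ⬝ᵥ ((KtilΘ A N K θs)⁻¹ *ᵥ z)) := by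
      intro z
      show (-(((KtilΘ A N K θs)ᵀ)⁻¹ *ᵥ vecM (Cᵀ * θs.2.2.2))) ⬝ᵥ z = _
      rw [← Matrix.transpose_nonsing_inv, Matrix.mulVec_transpose, neg_dotProduct,
        ← dotProduct_mulVec]
    have hvPh : vecM (PhatInfΘ K θs)
        = -((KhatΘ K θs)⁻¹ *ᵥ vecM (θs.2.2.1 * θs.2.2.1ᵀ)) := rfl
    have hvPt : vecM (PtilInfΘ A N K X₀ θs)
        = -((KtilΘ A N K θs)⁻¹ *ᵥ vecM (X₀ * θs.2.2.1ᵀ)) := rfl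
    simp only [hflipH, hflipT, hvPh, hvPt, zero_smul, add_zero, Matrix.zero_mul, zero_add,
      Matrix.mulVec_add, Matrix.mulVec_neg, Matrix.neg_mulVec, Matrix.mulVec_mulVec,
      dotProduct_add, dotProduct_neg, Matrix.mul_assoc]
  -- (a)
  refine ⟨?_, ?_, ?_, ?_⟩
  · ext r s
    have h := keyD (0, 0, 0, Matrix.single r s 1)
    simp only [Matrix.transpose_zero, Matrix.zero_mul, Matrix.mul_zero, add_zero, zero_add,
      Matrix.zero_kronecker, Matrix.kronecker_zero, smul_zero, Finset.sum_const_zero,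
      Matrix.zero_mulVec, Matrix.mulVec_zero, dotProduct_zero, zero_dotProduct,
      vecM_zero, Pi.zero_apply] at h
    rw [vecM_add, add_dotProduct, P4c, P5c, P5c, hPh] at h
    simp only [dot_std] at h
    linarith
  -- (b)
  · ext r s
    have h := keyD (0, 0, Matrix.single r s 1, 0)
    simp only [Matrix.transpose_zero, Matrix.zero_mul, Matrix.mul_zero, add_zero, zero_add,
      Matrix.zero_kronecker, Matrix.kronecker_zero, smul_zero, Finset.sum_const_zero,
      Matrix.zero_mulVec, Matrix.mulVec_zero, dotProduct_zero, zero_dotProduct,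
      vecM_zero, Pi.zero_apply] at h
    rw [vecM_add, dotProduct_add, P2, P1, P1, Matrix.transpose_transpose, hQh] at h
    simp only [dot_std] at h
    linarith
  -- (c)
  · ext r s
    have h := keyD (Matrix.single r s 1, 0, 0, 0)
    simp only [Matrix.transpose_zero, Matrix.zero_mul, Matrix.mul_zero, add_zero, zero_add,
      Matrix.zero_kronecker, Matrix.kronecker_zero, smul_zero, Finset.sum_const_zero,
      Matrix.zero_mulVec, Matrix.mulVec_zero, dotProduct_zero, zero_dotProduct,
      vecM_zero, Pi.zero_apply] at h
    rw [Matrix.add_mulVec, kron_mulVec, kron_mulVec, Matrix.transpose_one, Matrix.mul_one,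
      Matrix.one_mul, dotProduct_add, kron_mulVec, Matrix.one_mul,
      P2, P1, P1, hPh, hQh] at h
    simp only [dot_std] at h
    linarith
  -- (d)
  · intro i0
    ext r s
    have h := keyD (0, (fun k => if k = i0 then Matrix.single r s (1:ℝ) else 0 :
      Fin q → Matrix (Fin nh) (Fin nh) ℝ), 0, 0)
    simp only [Matrix.transpose_zero, Matrix.zero_mul, Matrix.mul_zero, add_zero, zero_add,
      Matrix.zero_kronecker, Matrix.kronecker_zero, smul_zero, Finset.sum_const_zero,
      Matrix.zero_mulVec, Matrix.mulVec_zero, dotProduct_zero, zero_dotProduct,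
      vecM_zero] at h
    have hKd : (∑ i, ∑ j, K i j • ((if i = i0 then Matrix.single r s (1:ℝ) else 0) ⊗ₖ θs.2.1 j
          + θs.2.1 i ⊗ₖ (if j = i0 then Matrix.single r s (1:ℝ) else 0)))
        = ∑ j, K i0 j • (Matrix.single r s (1:ℝ) ⊗ₖ θs.2.1 j)
          + ∑ i, K i i0 • (θs.2.1 i ⊗ₖ Matrix.single r s (1:ℝ)) := by
      simp only [smul_add, Finset.sum_add_distrib]
      congr 1
      · refine (Finset.sum_eq_single i0 (fun i _ hne => ?_) (by simp)).trans ?_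
        · simp [if_neg hne]
        · simp
      · refine Finset.sum_congr rfl fun i _ => ?_
        refine (Finset.sum_eq_single i0 (fun j _ hne => ?_) (by simp)).trans ?_
        · simp [if_neg hne]
        · simp
    have hKd' : (∑ i, ∑ j, K i j • ((if i = i0 then Matrix.single r s (1:ℝ) else 0) ⊗ₖ N j))
        = ∑ j, K i0 j • (Matrix.single r s (1:ℝ) ⊗ₖ N j) := by
      refine (Finset.sum_eq_single i0 (fun i _ hne => ?_) (by simp)).trans ?_
      · simp [if_neg hne]
      · simp
    rw [hKd, hKd'] at h
    have S1h : ∀ Q U W : Matrix (Fin nh) (Fin nh) ℝ,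
        vecM Q ⬝ᵥ vecM (U * (W * (Matrix.single r s (1:ℝ))ᵀ)) = (Qᵀ * (U * W)) r s :=
      fun Q U W => by rw [P1b, dot_std]
    have S1t : ∀ (Q : Matrix (Fin n) (Fin nh) ℝ) (U : Matrix (Fin n) (Fin n) ℝ)
        (W : Matrix (Fin n) (Fin nh) ℝ),
        vecM Q ⬝ᵥ vecM (U * (W * (Matrix.single r s (1:ℝ))ᵀ)) = (Qᵀ * (U * W)) r s :=
      fun Q U W => by rw [P1b, dot_std]
    have S2h : ∀ Q W : Matrix (Fin nh) (Fin nh) ℝ,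
        vecM Q ⬝ᵥ vecM ((Matrix.single r s (1:ℝ)) * W) = (Q * Wᵀ) r s :=
      fun Q W => by rw [P2, dot_std]
    simp only [Matrix.add_mulVec, sum_mulVecR, Matrix.smul_mulVec, kron_mulVec,
      dotProduct_add, dot_sumR, dotProduct_smul, smul_eq_mul,
      Matrix.mul_assoc] at h
    simp only [S1h, S1t, S2h, Matrix.transpose_mul, Matrix.transpose_transpose,
      hPh, hQh] at h
    have hKs : ∀ i, K i i0 = K i0 i := fun i => hK.apply i0 i
    simp only [hKs] at h
    simp only [Matrix.mul_sum, Matrix.sum_mul, Matrix.mul_smul, Matrix.smul_mul,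
      Matrix.sum_apply, Matrix.smul_apply, smul_eq_mul, Matrix.mul_assoc]
    linarith
end

section
/- Let S ∈ ℝ^{n̂×n̂} be invertible and set Ã = SÂS⁻¹, X̃₀ = SX̂₀, C̃ = ĈS⁻¹, Ñ_i = SN̂_iS⁻¹. Suppose X_∞, Y_∞ ∈ ℝ^{n×n̂} satisfy the algebraic Sylvester-type equations −X₀X̃₀ᵀ = AX_∞ + X_∞Ãᵀ + Σ_{i,j=1}^q N_i X_∞ Ñ_jᵀ k_{ij} and −CᵀC̃ = AᵀY_∞ + Y_∞Ã + Σ_{i,j=1}^q N_iᵀ Y_∞ Ñ_j k_{ij}. Suppose V = X_∞ M_V and W = Y_∞ M_W with M_V, M_W ∈ ℝ^{n̂×n̂} invertible, WᵀV is invertible, the reduced matrices satisfy the fixed-point (projection) relations Â = (WᵀV)⁻¹WᵀAV, N̂_i = (WᵀV)⁻¹WᵀN_iV, X̂₀ = (WᵀV)⁻¹WᵀX₀, Ĉ = CV, and that L̂ and L̃ are invertible. Let P̂, Q̂ ∈ ℝ^{n̂×n̂} and P̃, Q̃ ∈ ℝ^{n×n̂} be the unique solutions of L̂[P̂] = −X̂₀X̂₀ᵀ,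 L̂*[Q̂] = −ĈᵀĈ, L̃[P̃] = −X₀X̂₀ᵀ, L̃*[Q̃] = −CᵀĈ. Then V P̂ = P̃ and W(VᵀW)⁻¹ Q̂ = Q̃. -/
open Matrix MeasureTheory Filter
open scoped Kronecker Topology

lemma trace_adj_aux {a b : Type*} [Fintype a] [Fintype b] {q : ℕ}
    (A₁ : Matrix a a ℝ) (A₂ : Matrix b b ℝ)
    (N₁ : Fin q → Matrix a a ℝ) (N₂ : Fin q → Matrix b b ℝ)
    (K : Matrix (Fin q) (Fin q) ℝ) (X Y : Matrix a b ℝ) :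
    (Yᵀ * lyapM A₁ A₂ N₁ N₂ K X).trace = ((lyapAdjM A₁ A₂ N₁ N₂ K Y)ᵀ * X).trace := by
  simp only [lyapM, lyapAdjM, Matrix.transpose_add, Matrix.transpose_mul,
    Matrix.transpose_transpose, Matrix.transpose_sum, Matrix.transpose_smul,
    Matrix.mul_add, Matrix.add_mul, Matrix.mul_sum, Matrix.sum_mul,
    Matrix.mul_smul, Matrix.smul_mul, Matrix.trace_add, Matrix.trace_sum, Matrix.trace_smul]
  congr 1
  congr 1
  · rw [← Matrix.mul_assoc]
  · rw [← Matrix.mul_assoc, Matrix.trace_mul_comm, Matrix.mul_assoc]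
  · refine Finset.sum_congr rfl fun i _ => Finset.sum_congr rfl fun j _ => ?_
    congr 1
    rw [← Matrix.mul_assoc, ← Matrix.mul_assoc, Matrix.trace_mul_comm, Matrix.mul_assoc,
      Matrix.mul_assoc, Matrix.mul_assoc]

lemma eq_zero_of_trace_aux {a b : Type*} [Fintype a] [Fintype b] (Y : Matrix a b ℝ)
    (h : (Yᵀ * Y).trace = 0) : Y = 0 := by
  simp only [Matrix.trace, Matrix.diag, Matrix.mul_apply, Matrix.transpose_apply] at h
  ext i j
  have h2 : ∀ x ∈ Finset.univ (α := b), (0:ℝ) ≤ ∑ y, Y y x * Y y x :=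
    fun x _ => Finset.sum_nonneg fun y _ => mul_self_nonneg _
  have h3 := (Finset.sum_eq_zero_iff_of_nonneg h2).mp h j (Finset.mem_univ _)
  have h4 := (Finset.sum_eq_zero_iff_of_nonneg
    (fun y _ => mul_self_nonneg (Y y j))).mp h3 i (Finset.mem_univ _)
  simpa [mul_self_eq_zero] using h4

lemma adjInj_aux {a b : Type*} [Fintype a] [Fintype b] {q : ℕ}
    (A₁ : Matrix a a ℝ) (A₂ : Matrix b b ℝ)
    (N₁ : Fin q → Matrix a a ℝ) (N₂ : Fin q → Matrix b b ℝ)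
    (K : Matrix (Fin q) (Fin q) ℝ)
    (hs : Function.Surjective (lyapM A₁ A₂ N₁ N₂ K)) :
    Function.Injective (lyapAdjM A₁ A₂ N₁ N₂ K) := by
  intro Y₁ Y₂ hY
  have hsub : lyapAdjM A₁ A₂ N₁ N₂ K (Y₁ - Y₂) = 0 := by
    have hl : lyapAdjM A₁ A₂ N₁ N₂ K (Y₁ - Y₂)
        = lyapAdjM A₁ A₂ N₁ N₂ K Y₁ - lyapAdjM A₁ A₂ N₁ N₂ K Y₂ := by
      simp only [lyapAdjM, Matrix.mul_sub, Matrix.sub_mul, smul_sub,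
        Finset.sum_sub_distrib]
      abel
    rw [hl, hY, sub_self]
  obtain ⟨X, hX⟩ := hs (Y₁ - Y₂)
  have htr : ((Y₁ - Y₂)ᵀ * (Y₁ - Y₂)).trace = 0 := by
    have heq : ((Y₁ - Y₂)ᵀ * (Y₁ - Y₂)).trace
        = ((Y₁ - Y₂)ᵀ * lyapM A₁ A₂ N₁ N₂ K X).trace := by rw [hX]
    rw [heq, trace_adj_aux, hsub]
    simp
  have := eq_zero_of_trace_aux _ htr
  exact sub_eq_zero.mp this

/-- Theorem 4.3, first part: for the `T = ∞` Sylvester fixed-point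
iteration with `V = X_∞ M_V`, `W = Y_∞ M_W` and projection-form reduced matrices, the
infinite-horizon Gramians satisfy `V P̂ = P̃` and `W (VᵀW)⁻¹ Q̂ = Q̃`. -/
theorem stmt_15 {n nh m p q : ℕ}
    (A : Matrix (Fin n) (Fin n) ℝ) (N : Fin q → Matrix (Fin n) (Fin n) ℝ)
    (K : Matrix (Fin q) (Fin q) ℝ) (hK : K.IsSymm)
    (X₀ : Matrix (Fin n) (Fin m) ℝ) (C : Matrix (Fin p) (Fin n) ℝ)
    (Ahat : Matrix (Fin nh) (Fin nh) ℝ) (Nhat : Fin q → Matrix (Fin nh) (Fin nh) ℝ)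
    (X0hat : Matrix (Fin nh) (Fin m) ℝ) (Chat : Matrix (Fin p) (Fin nh) ℝ)
    (S : Matrix (Fin nh) (Fin nh) ℝ) (hS : IsUnit S)
    (Xinf Yinf : Matrix (Fin n) (Fin nh) ℝ)
    (hXinf : -(X₀ * (S * X0hat)ᵀ) =
      A * Xinf + Xinf * (S * Ahat * S⁻¹)ᵀ +
        ∑ i, ∑ j, K i j • (N i * Xinf * (S * Nhat j * S⁻¹)ᵀ))
    (hYinf : -(Cᵀ * (Chat * S⁻¹)) =
      Aᵀ * Yinf + Yinf * (S * Ahat * S⁻¹) +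
        ∑ i, ∑ j, K i j • ((N i)ᵀ * Yinf * (S * Nhat j * S⁻¹)))
    (V W : Matrix (Fin n) (Fin nh) ℝ)
    (MV MW : Matrix (Fin nh) (Fin nh) ℝ) (hMV : IsUnit MV) (hMW : IsUnit MW)
    (hV : V = Xinf * MV) (hW : W = Yinf * MW)
    (hWV : IsUnit (Wᵀ * V))
    (hAhat : Ahat = (Wᵀ * V)⁻¹ * Wᵀ * A * V)
    (hNhat : ∀ i, Nhat i = (Wᵀ * V)⁻¹ * Wᵀ * N i * V)
    (hX0hat : X0hat = (Wᵀ * V)⁻¹ * Wᵀ * X₀)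
    (hChat : Chat = C * V)
    (hLhat : Function.Bijective (lyapM Ahat Ahat Nhat Nhat K))
    (hLtil : Function.Bijective (lyapM A Ahat N Nhat K))
    (Phat Qhat : Matrix (Fin nh) (Fin nh) ℝ) (Ptil Qtil : Matrix (Fin n) (Fin nh) ℝ)
    (hPhat : lyapM Ahat Ahat Nhat Nhat K Phat = -(X0hat * X0hatᵀ))
    (hQhat : lyapAdjM Ahat Ahat Nhat Nhat K Qhat = -(Chatᵀ * Chat))
    (hPtil : lyapM A Ahat N Nhat K Ptil = -(X₀ * X0hatᵀ))
    (hQtil : lyapAdjM A Ahat N Nhat K Qtil = -(Cᵀ * Chat)) :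
    V * Phat = Ptil ∧ W * (Vᵀ * W)⁻¹ * Qhat = Qtil := by
  -- determinant units
  have hSd : IsUnit S.det := (Matrix.isUnit_iff_isUnit_det S).mp hS
  have hStd : IsUnit Sᵀ.det := by rw [Matrix.det_transpose]; exact hSd
  have hGd : IsUnit (Wᵀ * V).det := (Matrix.isUnit_iff_isUnit_det _).mp hWV
  have hHd : IsUnit (Vᵀ * W).det := by
    have : Vᵀ * W = (Wᵀ * V)ᵀ := by rw [Matrix.transpose_mul, Matrix.transpose_transpose]
    rw [this, Matrix.det_transpose]; exact hGd
  have hMVd : IsUnit MV.det := (Matrix.isUnit_iff_isUnit_det _).mp hMV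
  have hMWd : IsUnit MW.det := (Matrix.isUnit_iff_isUnit_det _).mp hMW
  have hss : Sᵀ * (Sᵀ)⁻¹ = 1 := Matrix.mul_nonsing_inv _ hStd
  have hsi : S⁻¹ * S = 1 := Matrix.nonsing_inv_mul _ hSd
  have e1 : V * MV⁻¹ = Xinf := by
    rw [hV, Matrix.mul_assoc, Matrix.mul_nonsing_inv _ hMVd, Matrix.mul_one]
  have e2 : W * MW⁻¹ = Yinf := by
    rw [hW, Matrix.mul_assoc, Matrix.mul_nonsing_inv _ hMWd, Matrix.mul_one]
  have eG : ∀ (z : Matrix (Fin nh) (Fin nh) ℝ), (Wᵀ * V)⁻¹ * (Wᵀ * (V * z)) = z := by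
    intro z
    rw [← Matrix.mul_assoc Wᵀ V z, ← Matrix.mul_assoc, Matrix.nonsing_inv_mul _ hGd,
      Matrix.one_mul]
  have eH : ∀ (z : Matrix (Fin nh) (Fin nh) ℝ), (Vᵀ * W)⁻¹ * (Vᵀ * (W * z)) = z := by
    intro z
    rw [← Matrix.mul_assoc Vᵀ W z, ← Matrix.mul_assoc, Matrix.nonsing_inv_mul _ hHd,
      Matrix.one_mul]
  -- Step 1: Ptil = Xinf * (Sᵀ)⁻¹
  have h1 : lyapM A Ahat N Nhat K (Xinf * (Sᵀ)⁻¹) = -(X₀ * X0hatᵀ) := by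
    have key := congrArg (fun M => M * (Sᵀ)⁻¹) hXinf
    simp only [Matrix.add_mul, Matrix.sum_mul, Matrix.smul_mul, Matrix.neg_mul,
      Matrix.transpose_mul, Matrix.transpose_nonsing_inv, Matrix.mul_assoc, hss,
      Matrix.mul_one] at key
    simp only [lyapM, Matrix.mul_assoc]
    exact key.symm
  -- Step 2: Qtil = Yinf * S
  have h2 : lyapAdjM A Ahat N Nhat K (Yinf * S) = -(Cᵀ * Chat) := by
    have key := congrArg (fun M => M * S) hYinf
    simp only [Matrix.add_mul, Matrix.sum_mul, Matrix.smul_mul, Matrix.neg_mul,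
      Matrix.mul_assoc, hsi, Matrix.mul_one] at key
    simp only [lyapAdjM, Matrix.mul_assoc]
    exact key.symm
  -- Step 3: Phat = MV⁻¹ * (Sᵀ)⁻¹
  have h3 : lyapM Ahat Ahat Nhat Nhat K (MV⁻¹ * (Sᵀ)⁻¹) = -(X0hat * X0hatᵀ) := by
    have key := congrArg (fun M => (Wᵀ * V)⁻¹ * (Wᵀ * M)) h1
    simp only [lyapM, hAhat, hNhat, hX0hat, Matrix.mul_add, Matrix.add_mul,
      Matrix.mul_sum, Matrix.sum_mul, Matrix.mul_smul, Matrix.smul_mul,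
      Matrix.mul_neg, Matrix.neg_mul, Matrix.transpose_mul,
      Matrix.transpose_nonsing_inv, Matrix.transpose_transpose, ← e1,
      Matrix.mul_assoc, eG] at key ⊢
    exact key
  -- Step 4: Qhat = (Vᵀ * W) * (MW⁻¹ * S)
  have h4 : lyapAdjM Ahat Ahat Nhat Nhat K ((Vᵀ * W) * (MW⁻¹ * S)) = -(Chatᵀ * Chat) := by
    have key := congrArg (fun M => Vᵀ * M) h2
    simp only [lyapAdjM, hAhat, hNhat, hChat, Matrix.mul_add, Matrix.add_mul,
      Matrix.mul_sum, Matrix.sum_mul, Matrix.mul_smul, Matrix.smul_mul,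
      Matrix.mul_neg, Matrix.neg_mul, Matrix.transpose_mul,
      Matrix.transpose_nonsing_inv, Matrix.transpose_transpose, ← e2,
      Matrix.mul_assoc, eH] at key ⊢
    exact key
  have hPt : Ptil = Xinf * (Sᵀ)⁻¹ := hLtil.injective (hPtil.trans h1.symm)
  have hPh : Phat = MV⁻¹ * (Sᵀ)⁻¹ := hLhat.injective (hPhat.trans h3.symm)
  have hQt : Qtil = Yinf * S :=
    adjInj_aux _ _ _ _ _ hLtil.surjective (hQtil.trans h2.symm)
  have hQh : Qhat = (Vᵀ * W) * (MW⁻¹ * S) :=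
    adjInj_aux _ _ _ _ _ hLhat.surjective (hQhat.trans h4.symm)
  constructor
  · rw [hPh, hPt, ← Matrix.mul_assoc, e1]
  · rw [hQh, hQt, Matrix.mul_assoc W, ← Matrix.mul_assoc (Vᵀ * W)⁻¹ (Vᵀ * W),
      Matrix.nonsing_inv_mul _ hHd, Matrix.one_mul, ← Matrix.mul_assoc, e2]
end
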